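/- arXiv:1701.06268 — 8 statements merged into one kernel-verified Lean document; each statement's English description precedes it below -/
import Mathlib

section
/- Let d be a power of 2. Then for every integer N ≥ d, the largest power of 2 dividing C(N, d) equals the largest power of 2 dividing ⌊N/d⌋. -/
open Nat

lemma digitsum_split (ℓ q r : ℕ) (hr : r < 2 ^ ℓ) :
    (Nat.digits 2 (2 ^ ℓ * q + r)).sum
      = (Nat.digits 2 r).sum + (Nat.digits 2 q).sum := by
  rcases Nat.eq_zero_or_pos q with rfl | hq
  · simp
  · have hlen : (Nat.digits 2 r).length ≤ ℓ := by
      rcases Nat.eq_zero_or_pos r with rfl | hr0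
      · simp
      · rw [Nat.digits_len 2 r (by norm_num) hr0.ne']
        have := Nat.log_lt_of_lt_pow hr0.ne' hr
        omega
    obtain ⟨k, hk⟩ := Nat.exists_eq_add_of_le hlen
    have h := Nat.digits_append_zeroes_append_digits (b := 2) (k := k) (m := q) (n := r)
      (by norm_num) hq
    rw [← hk] at h
    rw [add_comm (2 ^ ℓ * q) r, ← h]
    simp [List.sum_append, List.sum_replicate]

lemma kummer2 (n k : ℕ) :
    padicValNat 2 (Nat.choose (n + k) k)
      = (Nat.digits 2 k).sum + (Nat.digits 2 n).sum - (Nat.digits 2 (n + k)).sum := by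
  haveI : Fact (Nat.Prime 2) := ⟨Nat.prime_two⟩
  have := sub_one_mul_padicValNat_choose_eq_sub_sum_digits' (p := 2) (k := k) (n := n)
  simpa using this

/-- If `d` is a power of 2 and `N ≥ d`, then the largest power of 2 dividing `C(N, d)`
equals the largest power of 2 dividing `⌊N / d⌋`. -/
theorem stmt3 (d N : ℕ) (hd : ∃ ℓ : ℕ, d = 2 ^ ℓ) (hN : d ≤ N) :
    (N.choose d).factorization 2 = (N / d).factorization 2 := by
  obtain ⟨ℓ, rfl⟩ := hd
  haveI : Fact (Nat.Prime 2) := ⟨Nat.prime_two⟩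
  have hpow : 0 < 2 ^ ℓ := Nat.pow_pos (by norm_num)
  set q := N / 2 ^ ℓ with hq
  set r := N % 2 ^ ℓ with hr
  have hq1 : 1 ≤ q := Nat.one_le_div_iff hpow |>.mpr hN
  have hNeq : N = 2 ^ ℓ * q + r := by
    rw [hq, hr]; exact (Nat.div_add_mod N (2 ^ ℓ)).symm
  have hrlt : r < 2 ^ ℓ := Nat.mod_lt _ hpow
  have hsN : (Nat.digits 2 N).sum = (Nat.digits 2 r).sum + (Nat.digits 2 q).sum := by
    rw [hNeq]; exact digitsum_split ℓ q r hrlt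
  have hsub : N - 2 ^ ℓ = 2 ^ ℓ * (q - 1) + r := by
    rw [hNeq, Nat.mul_sub, mul_one]
    have : 2 ^ ℓ ≤ 2 ^ ℓ * q := Nat.le_mul_of_pos_right _ hq1
    omega
  have hsN' : (Nat.digits 2 (N - 2 ^ ℓ)).sum
      = (Nat.digits 2 r).sum + (Nat.digits 2 (q - 1)).sum := by
    rw [hsub]; exact digitsum_split ℓ (q - 1) r hrlt
  have hspow : (Nat.digits 2 (2 ^ ℓ)).sum = 1 := by
    have h0 : (2:ℕ) ^ ℓ = 2 ^ ℓ * 1 + 0 := by ring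
    rw [h0, digitsum_split ℓ 1 0 hpow]; simp
  have h1 : padicValNat 2 (N.choose (2 ^ ℓ))
      = 1 + ((Nat.digits 2 r).sum + (Nat.digits 2 (q - 1)).sum)
        - ((Nat.digits 2 r).sum + (Nat.digits 2 q).sum) := by
    have := kummer2 (N - 2 ^ ℓ) (2 ^ ℓ)
    rwa [Nat.sub_add_cancel hN, hspow, hsN, hsN'] at this
  have h2 : padicValNat 2 q
      = 1 + (Nat.digits 2 (q - 1)).sum - (Nat.digits 2 q).sum := by
    have := kummer2 (q - 1) 1
    rw [Nat.sub_add_cancel hq1, Nat.choose_one_right] at this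
    simpa using this
  have hfin : padicValNat 2 (N.choose (2 ^ ℓ)) = padicValNat 2 q := by
    rw [h1, h2]; omega
  rw [Nat.factorization_def _ Nat.prime_two, Nat.factorization_def _ Nat.prime_two, hfin]
end

section
/- (Schwartz–Zippel over ℤ/2^kℤ) Let Q be a nonzero multilinear polynomial of degree at most d in n variables over the ring ℤ/2^kℤ. Then the fraction of points x ∈ {0,1}^n with Q(x) ≠ 0 is at least 1/2^d. -/
/-- Evaluation of the multilinear polynomial with coefficients `c` at the Boolean point `x`. -/
def evalML {n k : ℕ} (c : Finset (Fin n) → ZMod (2 ^ k)) (x : Fin n → Bool) : ZMod (2 ^ k) :=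
  ∑ S : Finset (Fin n), c S * ∏ i ∈ S, (if x i then 1 else 0)

open Finset in
lemma prodIndML {n k : ℕ} (A T : Finset (Fin n)) :
    (∏ i ∈ A, (if i ∈ T then (1 : ZMod (2 ^ k)) else 0)) = if A ⊆ T then 1 else 0 := by
  split_ifs with h
  · exact Finset.prod_eq_one fun i hi => by simp [h hi]
  · obtain ⟨i, hi, hit⟩ := Finset.not_subset.mp h
    exact Finset.prod_eq_zero hi (by simp [hit])

open Finset in
lemma ieSumML {R : Type*} [CommRing R] {n : ℕ} (S0 A : Finset (Fin n)) (hA : A ⊆ S0) :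
    ∑ T ∈ S0.powerset, (-1 : R) ^ ((S0 \ T).card) * (if A ⊆ T then 1 else 0)
      = if A = S0 then 1 else 0 := by
  have h1 : ∑ T ∈ S0.powerset, (-1 : R) ^ ((S0 \ T).card) * (if A ⊆ T then 1 else 0)
      = ∑ T ∈ S0.powerset, (-1 : R) ^ T.card * (if T ⊆ S0 \ A then 1 else 0) := by
    refine Finset.sum_nbij' (fun T => S0 \ T) (fun T => S0 \ T) ?_ ?_ ?_ ?_ ?_
    · intro T hT; simp [Finset.mem_powerset]
    · intro T hT; simp [Finset.mem_powerset]
    · intro T hT; simp only [Finset.mem_powerset] at hT; exact Finset.sdiff_sdiff_eq_self hT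
    · intro T hT; simp only [Finset.mem_powerset] at hT; exact Finset.sdiff_sdiff_eq_self hT
    · intro T hT
      simp only [Finset.mem_powerset] at hT
      have hiff : (S0 \ T ⊆ S0 \ A) ↔ (A ⊆ T) := by
        constructor
        · intro h i hiA
          by_contra hiT
          exact (Finset.mem_sdiff.mp (h (Finset.mem_sdiff.mpr ⟨hA hiA, hiT⟩))).2 hiA
        · intro h i hi
          rw [Finset.mem_sdiff] at *
          exact ⟨hi.1, fun hiA => hi.2 (h hiA)⟩
      simp only [hiff]
  rw [h1]
  have h2 : S0.powerset.filter (· ⊆ S0 \ A) = (S0 \ A).powerset := by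
    ext T
    simp only [Finset.mem_filter, Finset.mem_powerset]
    exact ⟨fun h => h.2, fun h => ⟨h.trans (Finset.sdiff_subset), h⟩⟩
  calc ∑ T ∈ S0.powerset, (-1 : R) ^ T.card * (if T ⊆ S0 \ A then 1 else 0)
      = ∑ T ∈ S0.powerset.filter (· ⊆ S0 \ A), (-1 : R) ^ T.card := by
        rw [Finset.sum_filter]; exact Finset.sum_congr rfl fun T _ => by
          by_cases h : T ⊆ S0 \ A <;> simp [h]
    _ = ∑ T ∈ (S0 \ A).powerset, (-1 : R) ^ T.card := by rw [h2]
    _ = (((∑ T ∈ (S0 \ A).powerset, (-1 : ℤ) ^ T.card) : ℤ) : R) := by push_cast; rfl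
    _ = if A = S0 then 1 else 0 := by
        rw [Finset.sum_powerset_neg_one_pow_card]
        have hcond : (S0 \ A = ∅) = (A = S0) := by
          simp only [eq_iff_iff, Finset.sdiff_eq_empty_iff_subset]
          exact ⟨fun h => le_antisymm hA h, fun h => h ▸ le_refl _⟩
        by_cases hAe : A = S0
        · have he : S0 \ A = ∅ := by rw [hAe]; simp
          simp [he, hAe]
        · have he : S0 \ A ≠ ∅ := fun h => hAe ((hcond ▸ h : A = S0))
          simp [he, hAe]

lemma keyNonzeroML {k : ℕ} (hk : 1 ≤ k) (a b : ZMod (2 ^ k)) (ha : a ≠ 0) :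
    a + 2 ^ ((a.val).factorization 2 + 1) * b ≠ 0 := by
  haveI : NeZero ((2 : ℕ) ^ k) := ⟨by positivity⟩
  set m := (a.val).factorization 2 with hm
  have hav : a.val ≠ 0 := fun h => ha ((ZMod.val_eq_zero a).mp h)
  have hmk : m < k := by
    have h1 : 2 ^ m ≤ a.val := Nat.le_of_dvd (Nat.pos_of_ne_zero hav) (Nat.ordProj_dvd _ 2)
    have h2 : a.val < 2 ^ k := ZMod.val_lt a
    exact (Nat.pow_lt_pow_iff_right (le_refl 2)).mp (lt_of_le_of_lt h1 h2)
  intro heq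
  have hmul := congrArg (fun x => (2 : ZMod (2 ^ k)) ^ (k - 1 - m) * x) heq
  simp only [mul_zero, mul_add] at hmul
  have h2k : (2 : ZMod (2 ^ k)) ^ (k - 1 - m) * (2 ^ (m + 1) * b) = 0 := by
    rw [← mul_assoc, ← pow_add]
    have : k - 1 - m + (m + 1) = k := by omega
    rw [this]
    have : ((2 : ZMod (2 ^ k)) ^ k) = ((2 ^ k : ℕ) : ZMod (2 ^ k)) := by push_cast; ring
    rw [this, ZMod.natCast_self, zero_mul]
  rw [h2k, add_zero] at hmul
  -- now 2^(k-1-m) * a = 0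
  have haval : ((a.val : ℕ) : ZMod (2 ^ k)) = a := by simp [ZMod.natCast_val, ZMod.cast_id]
  have hu : ¬ 2 ∣ a.val / 2 ^ m := Nat.not_dvd_ordCompl Nat.prime_two hav
  have hfac : a.val = 2 ^ m * (a.val / 2 ^ m) := (Nat.mul_div_cancel' (Nat.ordProj_dvd _ 2)).symm
  have hcast : (2 : ZMod (2 ^ k)) ^ (k - 1 - m) * a
      = ((2 ^ (k - 1) * (a.val / 2 ^ m) : ℕ) : ZMod (2 ^ k)) := by
    conv_lhs => rw [← haval, hfac]
    push_cast
    rw [← mul_assoc, ← pow_add]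
    have hexp : k - 1 - m + m = k - 1 := by omega
    rw [hexp]
  rw [hcast] at hmul
  have hdvd : 2 ^ k ∣ 2 ^ (k - 1) * (a.val / 2 ^ m) :=
    (ZMod.natCast_eq_zero_iff _ _).mp hmul
  have h2 : (2 : ℕ) ^ k = 2 ^ (k - 1) * 2 := by
    rw [← pow_succ]
    congr 1
    omega
  have hdvd2 : 2 ^ (k - 1) * 2 ∣ 2 ^ (k - 1) * (a.val / 2 ^ m) := by rw [← h2]; exact hdvd
  exact hu ((Nat.mul_dvd_mul_iff_left (Nat.pow_pos (by norm_num) : 0 < 2 ^ (k-1))).mp hdvd2)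

open Finset in
lemma claimML {n k : ℕ} (hk : 1 ≤ k) (c : Finset (Fin n) → ZMod (2 ^ k))
    (m : ℕ) (S0 : Finset (Fin n)) (hS0 : c S0 ≠ 0)
    (hS0m : ((c S0).val).factorization 2 = m)
    (hmin : ∀ S, c S ≠ 0 → m ≤ ((c S).val).factorization 2)
    (hmax : ∀ S, c S ≠ 0 → ((c S).val).factorization 2 = m → S.card ≤ S0.card)
    (y : Fin n → Bool) :
    ∃ T : Finset (Fin n), evalML c (fun i => if i ∈ S0 then decide (i ∈ T) else y i) ≠ 0 := by
  by_contra hcon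
  push_neg at hcon
  set P : Finset (Fin n) → ZMod (2 ^ k) :=
    fun S => ∏ i ∈ S \ S0, (if y i then 1 else 0) with hP
  have hG : ∑ T ∈ S0.powerset, (-1 : ZMod (2 ^ k)) ^ ((S0 \ T).card) *
      evalML c (fun i => if i ∈ S0 then decide (i ∈ T) else y i) = 0 :=
    Finset.sum_eq_zero fun T _ => by rw [hcon T, mul_zero]
  have hG2 : ∑ T ∈ S0.powerset, (-1 : ZMod (2 ^ k)) ^ ((S0 \ T).card) *
      evalML c (fun i => if i ∈ S0 then decide (i ∈ T) else y i)
      = ∑ S : Finset (Fin n), (if S0 ⊆ S then c S * P S else 0) := by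
    unfold evalML
    simp_rw [Finset.mul_sum]
    rw [Finset.sum_comm]
    apply Finset.sum_congr rfl
    intro S _
    have hprod : ∀ T ∈ S0.powerset,
        (∏ i ∈ S, (if (if i ∈ S0 then decide (i ∈ T) else y i) then (1 : ZMod (2 ^ k)) else 0))
          = (if S ∩ S0 ⊆ T then 1 else 0) * P S := by
      intro T _
      calc ∏ i ∈ S, (if (if i ∈ S0 then decide (i ∈ T) else y i) then (1 : ZMod (2 ^ k)) else 0)
          = ∏ i ∈ S, (if i ∈ S0 then (if i ∈ T then (1 : ZMod (2 ^ k)) else 0)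
              else (if y i then 1 else 0)) :=
            Finset.prod_congr rfl fun i _ => by by_cases h : i ∈ S0 <;> simp [h]
        _ = (∏ i ∈ S.filter (· ∈ S0), (if i ∈ T then (1 : ZMod (2 ^ k)) else 0)) *
              ∏ i ∈ S.filter (fun i => ¬ i ∈ S0), (if y i then 1 else 0) := Finset.prod_ite _ _
        _ = (if S ∩ S0 ⊆ T then 1 else 0) * P S := by
            rw [Finset.filter_mem_eq_inter, prodIndML]
            simp only [hP]
            rw [Finset.sdiff_eq_filter]
    calc ∑ T ∈ S0.powerset, (-1 : ZMod (2 ^ k)) ^ ((S0 \ T).card) *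
          (c S * ∏ i ∈ S, (if (if i ∈ S0 then decide (i ∈ T) else y i) then (1 : ZMod (2 ^ k)) else 0))
        = ∑ T ∈ S0.powerset, (c S * P S) *
            ((-1 : ZMod (2 ^ k)) ^ ((S0 \ T).card) * (if S ∩ S0 ⊆ T then 1 else 0)) := by
          refine Finset.sum_congr rfl fun T hT => ?_
          rw [hprod T hT]; ring
      _ = (c S * P S) * ∑ T ∈ S0.powerset,
            (-1 : ZMod (2 ^ k)) ^ ((S0 \ T).card) * (if S ∩ S0 ⊆ T then 1 else 0) :=
          (Finset.mul_sum _ _ _).symm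
      _ = (c S * P S) * (if S ∩ S0 = S0 then 1 else 0) := by
          rw [ieSumML S0 (S ∩ S0) Finset.inter_subset_right]
      _ = if S0 ⊆ S then c S * P S else 0 := by
          simp only [Finset.inter_eq_right, mul_ite, mul_one, mul_zero]
  have hsplit : (if S0 ⊆ S0 then c S0 * P S0 else 0) +
      ∑ S ∈ Finset.univ.erase S0, (if S0 ⊆ S then c S * P S else 0)
      = ∑ S : Finset (Fin n), (if S0 ⊆ S then c S * P S else 0) :=
    Finset.add_sum_erase _ (fun S => if S0 ⊆ S then c S * P S else 0) (Finset.mem_univ S0)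
  have hfS0 : (if S0 ⊆ S0 then c S0 * P S0 else 0) = c S0 := by simp [hP]
  have hdvd : (2 : ZMod (2 ^ k)) ^ (m + 1) ∣
      ∑ S ∈ Finset.univ.erase S0, (if S0 ⊆ S then c S * P S else 0) := by
    refine Finset.dvd_sum fun S hS => ?_
    by_cases h1 : S0 ⊆ S
    swap
    · simp [h1]
    by_cases h2 : c S = 0
    · simp [h1, h2]
    have hss : S0 ⊂ S := ⟨h1, fun h => (Finset.ne_of_mem_erase hS) (le_antisymm h h1)⟩
    have hcard : S0.card < S.card := Finset.card_lt_card hss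
    have hν : m + 1 ≤ ((c S).val).factorization 2 := by
      rcases eq_or_lt_of_le (hmin S h2) with h | h
      · exact absurd (hmax S h2 h.symm) (by omega)
      · omega
    obtain ⟨u, hu⟩ : 2 ^ (m + 1) ∣ (c S).val :=
      dvd_trans (pow_dvd_pow 2 hν) (Nat.ordProj_dvd _ 2)
    haveI : NeZero ((2 : ℕ) ^ k) := ⟨by positivity⟩
    have hcS : c S = (2 : ZMod (2 ^ k)) ^ (m + 1) * (u : ZMod (2 ^ k)) := by
      have hv : ((c S).val : ZMod (2 ^ k)) = c S := by simp [ZMod.natCast_val, ZMod.cast_id]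
      rw [← hv, hu]; push_cast; ring
    rw [if_pos h1, hcS]
    exact ⟨(u : ZMod (2 ^ k)) * P S, by ring⟩
  obtain ⟨B, hB⟩ := hdvd
  have h0 : c S0 + 2 ^ (m + 1) * B = 0 := by
    calc c S0 + 2 ^ (m + 1) * B
        = (if S0 ⊆ S0 then c S0 * P S0 else 0) +
            ∑ S ∈ Finset.univ.erase S0, (if S0 ⊆ S then c S * P S else 0) := by rw [hfS0, hB]
      _ = ∑ S : Finset (Fin n), (if S0 ⊆ S then c S * P S else 0) := hsplit
      _ = 0 := by rw [← hG2, hG]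
  exact keyNonzeroML hk (c S0) B hS0 (by rw [hS0m]; exact h0)

/-- Schwartz–Zippel over `ℤ/2^kℤ`: a nonzero multilinear polynomial of degree at most `d`
is nonzero on at least a `2^{-d}` fraction of Boolean points. -/
theorem stmt4 (n d k : ℕ) (hk : 1 ≤ k) (c : Finset (Fin n) → ZMod (2 ^ k))
    (hdeg : ∀ S, c S ≠ 0 → S.card ≤ d) (hne : ∃ S, c S ≠ 0) :
    2 ^ n ≤ 2 ^ d * (Finset.univ.filter (fun x : Fin n → Bool => evalML c x ≠ 0)).card := by
  classical
  obtain ⟨S1, hS1⟩ := hne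
  set supp : Finset (Finset (Fin n)) := Finset.univ.filter (fun S => c S ≠ 0) with hsupp
  have hS1s : S1 ∈ supp := by simp [hsupp, hS1]
  have hsne : supp.Nonempty := ⟨S1, hS1s⟩
  set ν : Finset (Fin n) → ℕ := fun S => ((c S).val).factorization 2 with hν
  set m : ℕ := supp.inf' hsne ν with hm
  have hmin : ∀ S, c S ≠ 0 → m ≤ ν S := fun S hS => Finset.inf'_le ν (by simp [hsupp, hS])
  obtain ⟨S2, hS2, hS2eq⟩ := Finset.exists_mem_eq_inf' hsne ν
  have hS2f : S2 ∈ supp.filter (fun S => ν S = m) :=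
    Finset.mem_filter.mpr ⟨hS2, hS2eq.symm⟩
  obtain ⟨S0, hS0f, hS0max⟩ :=
    Finset.exists_max_image (supp.filter fun S => ν S = m) Finset.card ⟨S2, hS2f⟩
  rw [Finset.mem_filter] at hS0f
  have hS0 : c S0 ≠ 0 := by
    have := hS0f.1
    simp only [hsupp, Finset.mem_filter, Finset.mem_univ, true_and] at this
    exact this
  have hS0m : ν S0 = m := hS0f.2
  have hmax : ∀ S, c S ≠ 0 → ν S = m → S.card ≤ S0.card := fun S h1 h2 =>
    hS0max S (Finset.mem_filter.mpr ⟨by simp [hsupp, h1], h2⟩)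
  have claim := claimML hk c m S0 hS0 hS0m hmin hmax
  choose T hT using claim
  have hcount : 2 ^ (n - S0.card) ≤
      (Finset.univ.filter (fun x : Fin n → Bool => evalML c x ≠ 0)).card := by
    have hinj := Finset.card_le_card_of_injOn
      (f := fun g : {i : Fin n // i ∉ S0} → Bool =>
        (fun i => if i ∈ S0 then decide (i ∈ T (fun j => if h : j ∉ S0 then g ⟨j, h⟩ else false))
          else (if h : i ∉ S0 then g ⟨i, h⟩ else false) : Fin n → Bool))
      (s := Finset.univ)
      (t := Finset.univ.filter (fun x : Fin n → Bool => evalML c x ≠ 0))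
      (fun g _ => Finset.mem_filter.mpr ⟨Finset.mem_univ _, hT _⟩)
      ?_
    · rw [Finset.card_univ] at hinj
      have hcardfun : Fintype.card ({i : Fin n // i ∉ S0} → Bool) = 2 ^ (n - S0.card) := by
        rw [Fintype.card_fun, Fintype.card_bool]
        congr 1
        rw [Fintype.card_subtype]
        have : Finset.univ.filter (fun i : Fin n => i ∉ S0) = S0ᶜ := by
          ext i; simp
        rw [this, Finset.card_compl, Fintype.card_fin]
      rw [hcardfun] at hinj
      exact hinj
    · intro g1 _ g2 _ h
      funext j
      obtain ⟨i, hi⟩ := j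
      have := congrFun h i
      simp only [hi, if_neg, dif_pos] at this
      simpa [hi] using this
  have hc1 : S0.card ≤ d := hdeg S0 hS0
  have hc2 : S0.card ≤ n := by
    have := Finset.card_le_univ S0
    simpa using this
  calc (2 : ℕ) ^ n = 2 ^ S0.card * 2 ^ (n - S0.card) := by
        rw [← pow_add]; congr 1; omega
    _ ≤ 2 ^ d * (Finset.univ.filter (fun x : Fin n → Bool => evalML c x ≠ 0)).card :=
        Nat.mul_le_mul (Nat.pow_le_pow_right (by norm_num) hc1) hcount
end

section
/- (Hamming ball interpolation) A multilinear polynomial Q of degree at most d over ℤ/2^kℤ vanishes at all points of {0,1}^n if and only if it vanishes at all points of {0,1}^n of Hamming weight at most d. More generally, the same holds for any Hamming ball of radius d in {0,1}^n. -/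
/-- Flip the coordinates of `x` inside `W`. -/
def flipML {n : ℕ} (x : Fin n → Bool) (W : Finset (Fin n)) : Fin n → Bool :=
  fun i => if i ∈ W then !(x i) else x i

/-- Key algebraic identity: the signed sum of evaluations over all flips within a set `D`
of size `> d` vanishes, because the polynomial has degree `≤ d`. -/
lemma keyML {n k d : ℕ} (c : Finset (Fin n) → ZMod (2 ^ k))
    (hdeg : ∀ S, c S ≠ 0 → S.card ≤ d)
    (x : Fin n → Bool) (D : Finset (Fin n)) (hD : d < D.card) :
    ∑ W ∈ D.powerset, (-1 : ZMod (2 ^ k)) ^ W.card * evalML c (flipML x W) = 0 := by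
  classical
  unfold evalML
  have hswap :
      ∑ W ∈ D.powerset, (-1 : ZMod (2 ^ k)) ^ W.card *
          ∑ U : Finset (Fin n), c U * ∏ i ∈ U, (if flipML x W i then 1 else 0)
        = ∑ U : Finset (Fin n), c U *
            ∑ W ∈ D.powerset, (-1 : ZMod (2 ^ k)) ^ W.card *
              ∏ i ∈ U, (if flipML x W i then 1 else 0) := by
    simp only [Finset.mul_sum]
    rw [Finset.sum_comm]
    congr 1; funext U; congr 1; funext W; ring
  rw [hswap]
  apply Finset.sum_eq_zero
  intro U _
  by_cases hDU : D ⊆ U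
  · have hUd : ¬ U.card ≤ d := by
      have := Finset.card_le_card hDU; omega
    have hcU : c U = 0 := by
      by_contra h; exact hUd (hdeg U h)
    simp [hcU]
  · obtain ⟨j, hjD, hjU⟩ := Finset.not_subset.mp hDU
    set ft : Fin n → ZMod (2 ^ k) :=
      fun i => -(if i ∈ U then (if !(x i) then 1 else 0) else 1) with hft
    set ff : Fin n → ZMod (2 ^ k) :=
      fun i => (if i ∈ U then (if x i then 1 else 0) else 1) with hff
    have hprod : ∀ W ∈ D.powerset,
        (-1 : ZMod (2 ^ k)) ^ W.card * ∏ i ∈ U, (if flipML x W i then 1 else 0)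
          = (∏ i ∈ U \ D, (if x i then (1 : ZMod (2 ^ k)) else 0)) *
            ((∏ i ∈ W, ft i) * ∏ i ∈ D \ W, ff i) := by
      intro W hW
      rw [Finset.mem_powerset] at hW
      -- split the product over U into U ∩ D and U \ D
      have hsplit : ∏ i ∈ U, (if flipML x W i then (1 : ZMod (2 ^ k)) else 0)
          = (∏ i ∈ U ∩ D, (if flipML x W i then (1 : ZMod (2 ^ k)) else 0)) *
            ∏ i ∈ U \ D, (if x i then (1 : ZMod (2 ^ k)) else 0) := by
        rw [← Finset.prod_inter_mul_prod_diff U D]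
        congr 1
        apply Finset.prod_congr rfl
        intro i hi
        have hiW : i ∉ W := fun h => (Finset.mem_sdiff.mp hi).2 (hW h)
        simp [flipML, hiW]
      -- express the U ∩ D part as a product over D
      have h2 : ∏ i ∈ U ∩ D, (if flipML x W i then (1 : ZMod (2 ^ k)) else 0)
          = ∏ i ∈ D, (if i ∈ U then (if flipML x W i then (1 : ZMod (2 ^ k)) else 0) else 1) := by
        rw [Finset.prod_ite_mem, Finset.inter_comm]
      -- split product over D into W and D \ W
      have h3 : ∏ i ∈ D, (if i ∈ U then (if flipML x W i then (1 : ZMod (2 ^ k)) else 0) else 1)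
          = (∏ i ∈ W, (if i ∈ U then (if !(x i) then (1 : ZMod (2 ^ k)) else 0) else 1)) *
            ∏ i ∈ D \ W, ff i := by
        rw [← Finset.prod_inter_mul_prod_diff D W, Finset.inter_eq_right.mpr hW]
        congr 1
        · apply Finset.prod_congr rfl
          intro i hi; simp [flipML, hi]
        · apply Finset.prod_congr rfl
          intro i hi
          have hiW : i ∉ W := (Finset.mem_sdiff.mp hi).2
          simp [flipML, hiW, hff]
      have h4 : (∏ i ∈ W, ft i)
          = (-1 : ZMod (2 ^ k)) ^ W.card *
            ∏ i ∈ W, (if i ∈ U then (if !(x i) then (1 : ZMod (2 ^ k)) else 0) else 1) := by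
        have : ∀ i ∈ W, ft i =
            (-1 : ZMod (2 ^ k)) *
              (if i ∈ U then (if !(x i) then (1 : ZMod (2 ^ k)) else 0) else 1) := by
          intro i _; rw [hft]; ring
        rw [Finset.prod_congr rfl this, Finset.prod_mul_distrib, Finset.prod_const]
      rw [hsplit, h2, h3, h4]; ring
    rw [Finset.mul_sum, Finset.sum_congr rfl (fun W hW => by
      rw [show c U * ((-1 : ZMod (2 ^ k)) ^ W.card *
          ∏ i ∈ U, (if flipML x W i then 1 else 0))
        = c U * ((∏ i ∈ U \ D, (if x i then (1 : ZMod (2 ^ k)) else 0)) *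
            ((∏ i ∈ W, ft i) * ∏ i ∈ D \ W, ff i)) from by rw [hprod W hW]])]
    rw [← Finset.mul_sum, ← Finset.mul_sum, ← Finset.prod_add]
    have hj : ft j + ff j = 0 := by
      simp [hft, hff, hjU]
    rw [Finset.prod_eq_zero hjD hj, mul_zero, mul_zero]

/-- A multilinear polynomial of degree at most `d` over `ℤ/2^kℤ` vanishes everywhere on
`{0,1}^n` iff it vanishes on the Hamming ball of radius `d` around an arbitrary point `z`.
Taking `z = 0` gives the Hamming-weight-at-most-`d` special case. -/
theorem stmt7 (n d k : ℕ) (c : Finset (Fin n) → ZMod (2 ^ k))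
    (hdeg : ∀ S, c S ≠ 0 → S.card ≤ d) (z : Fin n → Bool) :
    (∀ x : Fin n → Bool,
        (Finset.univ.filter (fun i => x i ≠ z i)).card ≤ d → evalML c x = 0)
      ↔ (∀ x : Fin n → Bool, evalML c x = 0) := by
  classical
  constructor
  · intro hball
    have main : ∀ m : ℕ, ∀ x : Fin n → Bool,
        (Finset.univ.filter (fun i => x i ≠ z i)).card = m → evalML c x = 0 := by
      intro m
      induction m using Nat.strong_induction_on with
      | _ m IH =>
        intro x hx
        by_cases hm : m ≤ d
        · exact hball x (by omega)
        · set D := Finset.univ.filter (fun i => x i ≠ z i) with hDdef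
          have hDd : d < D.card := by omega
          have hkey := keyML c hdeg x D hDd
          have hflipdist : ∀ W : Finset (Fin n), W ⊆ D →
              Finset.univ.filter (fun i => flipML x W i ≠ z i) = D \ W := by
            intro W hWsub
            ext i
            simp only [Finset.mem_filter, Finset.mem_univ, true_and, Finset.mem_sdiff, hDdef]
            by_cases hiW : i ∈ W
            · have hiD : x i ≠ z i := by
                have := hWsub hiW
                simpa [hDdef] using this
              simp only [flipML, hiW, if_pos]
              constructor
              · intro h; exact absurd (by revert hiD h; cases x i <;> cases z i <;> simp) h
              · intro h; exact absurd trivial h.2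
            · simp [flipML, hiW]
          have hzero : ∀ W ∈ D.powerset, W ≠ ∅ →
              (-1 : ZMod (2 ^ k)) ^ W.card * evalML c (flipML x W) = 0 := by
            intro W hW hWne
            rw [Finset.mem_powerset] at hW
            have hcard : (Finset.univ.filter (fun i => flipML x W i ≠ z i)).card = D.card - W.card := by
              rw [hflipdist W hW, Finset.card_sdiff_of_subset hW]
            have hWpos : 0 < W.card := Finset.card_pos.mpr (Finset.nonempty_iff_ne_empty.mpr hWne)
            have hlt : D.card - W.card < m := by omega
            rw [IH (D.card - W.card) (by omega) _ hcard, mul_zero]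
          rw [Finset.sum_eq_single_of_mem ∅ (Finset.empty_mem_powerset D)
              (fun b hb hbne => hzero b hb hbne)] at hkey
          have hfe : flipML x ∅ = x := by funext i; simp [flipML]
          simpa [hfe] using hkey
    intro x
    exact main _ x rfl
  · intro h x _
    exact h x
end

section
/- Let F : {0,1}^n → {0,1} be a Boolean function and d, k positive integers. If γ_{d,k}(F) > 1 − 1/2^d, then γ_{d,k}(F) = γ_{d,1}(F): any approximation over ℤ/2^kℤ achieving agreement better than 1 − 2^{−d} can be matched by a degree-d polynomial over 𝔽₂. -/
/-- The `k`-lift of a Boolean function: `0 ↦ 0`, `1 ↦ 2^{k-1} ∈ ℤ/2^kℤ`. -/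
def lift {n : ℕ} (k : ℕ) (F : (Fin n → Bool) → Bool) (x : Fin n → Bool) : ZMod (2 ^ k) :=
  if F x then 2 ^ (k - 1) else 0

/-- The number of Boolean points where `P` agrees with the `k`-lift of `F`. -/
def agrCount {n : ℕ} (k : ℕ) (F : (Fin n → Bool) → Bool)
    (c : Finset (Fin n) → ZMod (2 ^ k)) : ℕ :=
  (Finset.univ.filter (fun x : Fin n → Bool => evalML c x = lift k F x)).card

/-- `gamma n d k F` is the maximum, over multilinear polynomials of degree at most `d`
over `ℤ/2^kℤ`, of the number of points of agreement with the `k`-lift of `F`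
(so `γ_{d,k}(F)` equals `gamma n d k F / 2^n`). -/
def gamma (n d k : ℕ) (F : (Fin n → Bool) → Bool) : ℕ :=
  (Finset.univ.filter
      (fun c : Finset (Fin n) → ZMod (2 ^ k) => ∀ S, c S ≠ 0 → S.card ≤ d)).sup
    (agrCount k F)

section Aux

lemma sz {ι : Type*} [DecidableEq ι] {R : Type*} [CommRing R] [DecidableEq R] (A : Finset ι) :
    ∀ (d : ℕ) (c : Finset ι → R), (∀ S, c S ≠ 0 → S ⊆ A ∧ S.card ≤ d) → (∃ S, c S ≠ 0) →
    2 ^ A.card ≤ 2 ^ d *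
      (A.powerset.filter (fun T : Finset ι => ∑ S ∈ T.powerset, c S ≠ 0)).card := by
  classical
  induction A using Finset.induction_on with
  | empty =>
    intro d c hsupp ⟨S, hS⟩
    have hSe : S = ∅ := Finset.subset_empty.mp (hsupp S hS).1
    subst hSe
    have hset : (Finset.powerset (∅ : Finset ι)).filter
        (fun T : Finset ι => ∑ S ∈ T.powerset, c S ≠ 0) = {∅} := by
      rw [Finset.powerset_empty, Finset.filter_singleton]
      simp [hS]
    rw [hset]
    simp [Nat.one_le_two_pow]
  | @insert a A' ha ih =>
    intro d c hsupp ⟨S, hS⟩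
    set c0 : Finset ι → R := fun S => if a ∈ S then 0 else c S with hc0
    set c1 : Finset ι → R := fun S => if a ∈ S then 0 else c (insert a S) with hc1
    have hsupp0 : ∀ S, c0 S ≠ 0 → S ⊆ A' ∧ S.card ≤ d := by
      intro S hS0
      by_cases haS : a ∈ S
      · simp [hc0, haS] at hS0
      · simp only [hc0, haS, if_false] at hS0
        obtain ⟨h1, h2⟩ := hsupp S hS0
        exact ⟨fun x hx => by
          rcases Finset.mem_insert.mp (h1 hx) with h | h
          · exact absurd (h ▸ hx) haS
          · exact h, h2⟩
    have hsupp1 : ∀ S, c1 S ≠ 0 → S ⊆ A' ∧ S.card + 1 ≤ d := by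
      intro S hS1
      by_cases haS : a ∈ S
      · simp [hc1, haS] at hS1
      · simp only [hc1, haS, if_false] at hS1
        obtain ⟨h1, h2⟩ := hsupp _ hS1
        have hsub : S ⊆ A' := by
          intro x hx
          rcases Finset.mem_insert.mp (h1 (Finset.mem_insert_of_mem hx)) with h | h
          · exact absurd (h ▸ hx) haS
          · exact h
        have : (insert a S).card = S.card + 1 := Finset.card_insert_of_notMem haS
        exact ⟨hsub, by omega⟩
    have hsum0 : ∀ T ∈ A'.powerset, (∑ S ∈ T.powerset, c S) = ∑ S ∈ T.powerset, c0 S := by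
      intro T hT
      apply Finset.sum_congr rfl
      intro S hSmem
      have : a ∉ S := fun haS => ha
        ((Finset.mem_powerset.mp hT) ((Finset.mem_powerset.mp hSmem) haS))
      simp [hc0, this]
    have hsum1 : ∀ T ∈ A'.powerset,
        (∑ S ∈ (insert a T).powerset, c S) = ∑ S ∈ T.powerset, (c0 S + c1 S) := by
      intro T hT
      have haT : a ∉ T := fun haT => ha ((Finset.mem_powerset.mp hT) haT)
      rw [Finset.sum_powerset_insert haT, hsum0 T hT, Finset.sum_add_distrib]
      congr 1
      apply Finset.sum_congr rfl
      intro S hSmem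
      have : a ∉ S := fun haS => haT ((Finset.mem_powerset.mp hSmem) haS)
      simp [hc1, this]
    have hcount : (((insert a A').powerset).filter
          (fun T : Finset ι => ∑ S ∈ T.powerset, c S ≠ 0)).card
        = (A'.powerset.filter (fun T : Finset ι => ∑ S ∈ T.powerset, c0 S ≠ 0)).card
          + (A'.powerset.filter
              (fun T : Finset ι => ∑ S ∈ T.powerset, (c0 S + c1 S) ≠ 0)).card := by
      rw [Finset.powerset_insert, Finset.filter_union]
      rw [Finset.card_union_of_disjoint]
      · congr 1
        · apply Finset.card_bij (fun T _ => T)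
          · intro T hT
            simp only [Finset.mem_filter] at hT ⊢
            exact ⟨hT.1, by rw [← hsum0 T hT.1]; exact hT.2⟩
          · intro T1 _ T2 _ h; exact h
          · intro T hT
            simp only [Finset.mem_filter] at hT
            exact ⟨T, Finset.mem_filter.mpr ⟨hT.1, by rw [hsum0 T hT.1]; exact hT.2⟩, rfl⟩
        · refine (Finset.card_bij (fun T _ => insert a T) ?_ ?_ ?_).symm
          · intro T hT
            simp only [Finset.mem_filter] at hT ⊢
            exact ⟨Finset.mem_image_of_mem _ hT.1, by rw [hsum1 T hT.1]; exact hT.2⟩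
          · intro T1 h1 T2 h2 hins
            simp only [Finset.mem_filter, Finset.mem_powerset] at h1 h2
            have ha1 : a ∉ T1 := fun hmem => ha (h1.1 hmem)
            have ha2 : a ∉ T2 := fun hmem => ha (h2.1 hmem)
            rw [← Finset.erase_insert ha1, ← Finset.erase_insert ha2, hins]
          · intro T hT
            simp only [Finset.mem_filter, Finset.mem_image] at hT
            obtain ⟨⟨T', hT', hTeq⟩, hne⟩ := hT
            refine ⟨T', Finset.mem_filter.mpr ⟨hT', ?_⟩, hTeq⟩
            rw [← hsum1 T' hT', hTeq]; exact hne
      · apply Finset.disjoint_filter_filter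
        rw [Finset.disjoint_left]
        intro T hT hT2
        simp only [Finset.mem_image, Finset.mem_powerset] at hT hT2
        obtain ⟨T', _, rfl⟩ := hT2
        exact ha (hT (Finset.mem_insert_self a T'))
    rw [hcount, Finset.card_insert_of_notMem ha, pow_succ, mul_comm (2 ^ A'.card) 2]
    by_cases h1z : ∀ S, c1 S = 0
    · have hc0ne : ∃ S, c0 S ≠ 0 := by
        by_cases haS : a ∈ S
        · exfalso
          have hne : c1 (S.erase a) ≠ 0 := by
            have hna : a ∉ S.erase a := Finset.notMem_erase a S
            simp only [hc1, hna, if_false, Finset.insert_erase haS]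
            exact hS
          exact hne (h1z _)
        · exact ⟨S, by simpa [hc0, haS] using hS⟩
      have hEq : (A'.powerset.filter (fun T : Finset ι => ∑ S ∈ T.powerset, (c0 S + c1 S) ≠ 0))
          = (A'.powerset.filter (fun T : Finset ι => ∑ S ∈ T.powerset, c0 S ≠ 0)) := by
        apply Finset.filter_congr
        intro T _
        simp only [h1z, add_zero]
      rw [hEq]
      have hIH := ih d c0 hsupp0 hc0ne
      rw [mul_add]
      linarith
    · push_neg at h1z
      obtain ⟨S1, hS1⟩ := h1z
      have hd1 : 1 ≤ d := by have := (hsupp1 S1 hS1).2; omega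
      have hdd : 2 ^ d = 2 * 2 ^ (d - 1) := by
        rw [← pow_succ']
        congr 1
        omega
      by_cases h0z : ∀ S, c0 S = 0
      · -- c0 ≡ 0 : use c1 with degree d - 1
        have hsupp1' : ∀ S, c1 S ≠ 0 → S ⊆ A' ∧ S.card ≤ d - 1 := by
          intro S hSne
          obtain ⟨h1, h2⟩ := hsupp1 S hSne
          exact ⟨h1, by omega⟩
        have hEq : (A'.powerset.filter (fun T : Finset ι => ∑ S ∈ T.powerset, (c0 S + c1 S) ≠ 0))
            = (A'.powerset.filter (fun T : Finset ι => ∑ S ∈ T.powerset, c1 S ≠ 0)) := by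
          apply Finset.filter_congr
          intro T _
          simp only [h0z, zero_add]
        rw [hEq]
        have hIH := ih (d - 1) c1 hsupp1' ⟨S1, hS1⟩
        calc 2 * 2 ^ A'.card
            ≤ 2 * (2 ^ (d-1) * (A'.powerset.filter
                (fun T : Finset ι => ∑ S ∈ T.powerset, c1 S ≠ 0)).card) :=
              Nat.mul_le_mul_left 2 hIH
          _ = 2 ^ d * (A'.powerset.filter
                (fun T : Finset ι => ∑ S ∈ T.powerset, c1 S ≠ 0)).card := by
              rw [hdd, mul_assoc]
          _ ≤ _ := Nat.mul_le_mul_left _ (Nat.le_add_left _ _)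
      · push_neg at h0z
        obtain ⟨S0, hS0⟩ := h0z
        by_cases hhz : ∀ S, c0 S + c1 S = 0
        · -- c0 = -c1, degree ≤ d - 1
          have hsupp0' : ∀ S, c0 S ≠ 0 → S ⊆ A' ∧ S.card ≤ d - 1 := by
            intro S hSne
            have hc1ne : c1 S ≠ 0 := by
              intro hz; apply hSne
              have := hhz S; rw [hz, add_zero] at this; exact this
            obtain ⟨h1, h2⟩ := hsupp1 S hc1ne
            exact ⟨(hsupp0 S hSne).1, by omega⟩
          have hIH := ih (d - 1) c0 hsupp0' ⟨S0, hS0⟩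
          calc 2 * 2 ^ A'.card
              ≤ 2 * (2 ^ (d-1) * (A'.powerset.filter
                  (fun T : Finset ι => ∑ S ∈ T.powerset, c0 S ≠ 0)).card) :=
                Nat.mul_le_mul_left 2 hIH
            _ = 2 ^ d * (A'.powerset.filter
                  (fun T : Finset ι => ∑ S ∈ T.powerset, c0 S ≠ 0)).card := by
                rw [hdd, mul_assoc]
            _ ≤ _ := Nat.mul_le_mul_left _ (Nat.le_add_right _ _)
        · push_neg at hhz
          obtain ⟨S2, hS2⟩ := hhz
          have hsupp01 : ∀ S, c0 S + c1 S ≠ 0 → S ⊆ A' ∧ S.card ≤ d := by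
            intro S hSne
            by_cases h0 : c0 S = 0
            · have h1 : c1 S ≠ 0 := by
                intro hz; apply hSne; rw [h0, hz, add_zero]
              obtain ⟨ha1, ha2⟩ := hsupp1 S h1
              exact ⟨ha1, by omega⟩
            · exact hsupp0 S h0
          have hIH0 := ih d c0 hsupp0 ⟨S0, hS0⟩
          have hIH2 := ih d (fun S => c0 S + c1 S) hsupp01 ⟨S2, hS2⟩
          rw [mul_add, two_mul]
          exact Nat.add_le_add hIH0 hIH2
lemma evalML_eq {n k : ℕ} (c : Finset (Fin n) → ZMod (2 ^ k)) (x : Fin n → Bool) :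
    evalML c x = ∑ S ∈ (Finset.univ.filter (fun i => x i = true)).powerset, c S := by
  unfold evalML

  have h1 : ∀ S ∈ (Finset.univ.filter (fun i => x i = true)).powerset,
      c S * ∏ i ∈ S, (if x i then (1 : ZMod (2^k)) else 0) = c S := by
    intro S hS
    rw [Finset.prod_boole, if_pos, mul_one]
    intro i hi
    exact (Finset.mem_filter.mp ((Finset.mem_powerset.mp hS) hi)).2
  have h2 : ∀ S ∈ (Finset.univ : Finset (Finset (Fin n))),
      S ∉ (Finset.univ.filter (fun i => x i = true)).powerset →
      c S * ∏ i ∈ S, (if x i then (1 : ZMod (2^k)) else 0) = 0 := by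
    intro S _ hS
    rw [Finset.prod_boole, if_neg, mul_zero]
    intro hall
    exact hS (Finset.mem_powerset.mpr fun i hi =>
      Finset.mem_filter.mpr ⟨Finset.mem_univ i, hall i hi⟩)
  exact ((Finset.sum_subset (Finset.subset_univ _) h2).symm.trans (Finset.sum_congr rfl h1))
lemma count_transfer {n : ℕ} (p : Finset (Fin n) → Prop) [DecidablePred p] :
    ((Finset.univ : Finset (Finset (Fin n))).filter p).card
      = (Finset.univ.filter
          (fun x : Fin n → Bool => p (Finset.univ.filter (fun i => x i = true)))).card := by
  apply Finset.card_bij (fun T _ => fun i => decide (i ∈ T))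
  · intro T hT
    simp only [Finset.mem_filter, Finset.mem_univ, true_and] at hT ⊢
    have : (Finset.univ.filter (fun i => decide (i ∈ T) = true)) = T := by
      ext i; simp
    rw [this]; exact hT
  · intro T1 _ T2 _ h
    ext i
    have := congrFun h i
    simpa using this
  · intro x hx
    simp only [Finset.mem_filter, Finset.mem_univ, true_and] at hx
    refine ⟨Finset.univ.filter (fun i => x i = true), ?_, ?_⟩
    · simp only [Finset.mem_filter, Finset.mem_univ, true_and]
      exact hx
    · funext i; simp
def phi (k : ℕ) (b : ZMod (2 ^ 1)) : ZMod (2 ^ k) :=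
  if b = 0 then 0 else 2 ^ (k - 1)

lemma phi_zero (k : ℕ) : phi k 0 = 0 := by simp [phi]

lemma phi_one (k : ℕ) : phi k 1 = 2 ^ (k - 1) := by
  rw [phi, if_neg]; decide

lemma zmod2_cases (b : ZMod (2 ^ 1)) : b = 0 ∨ b = 1 := by revert b; decide

lemma pow_half_add (k : ℕ) (hk : 1 ≤ k) :
    (2 : ZMod (2 ^ k)) ^ (k - 1) + 2 ^ (k - 1) = 0 := by
  have h1 : (2 : ZMod (2 ^ k)) ^ (k - 1) + 2 ^ (k - 1) = 2 ^ (k - 1 + 1) := by ring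
  rw [h1, show k - 1 + 1 = k from by omega]
  have := ZMod.natCast_self (2 ^ k)
  push_cast at this
  exact this
lemma phi_add (k : ℕ) (hk : 1 ≤ k) (a b : ZMod (2 ^ 1)) :
    phi k (a + b) = phi k a + phi k b := by
  rcases zmod2_cases a with rfl | rfl <;> rcases zmod2_cases b with rfl | rfl <;>
    simp [phi_zero, phi_one]
  · rw [show (1 : ZMod (2 ^ 1)) + 1 = 0 from by decide, phi_zero,
      (pow_half_add k hk).symm]
lemma pow_half_ne_zero (k : ℕ) (hk : 1 ≤ k) : (2 : ZMod (2 ^ k)) ^ (k - 1) ≠ 0 := by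
  haveI : NeZero (2 ^ k) := ⟨by positivity⟩
  have h : ((2 ^ (k - 1) : ℕ) : ZMod (2 ^ k)) ≠ 0 := by
    rw [Ne, ZMod.natCast_eq_zero_iff]
    intro hdvd
    have h1 := Nat.le_of_dvd (by positivity) hdvd
    have h2 : (2:ℕ) ^ (k - 1) < 2 ^ k := Nat.pow_lt_pow_right (by norm_num) (by omega)
    omega
  push_cast at h
  exact h
lemma phi_inj (k : ℕ) (hk : 1 ≤ k) {a b : ZMod (2 ^ 1)} (h : phi k a = phi k b) : a = b := by
  rcases zmod2_cases a with rfl | rfl <;> rcases zmod2_cases b with rfl | rfl <;>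
    simp_all [phi_zero, phi_one]
  · exact (pow_half_ne_zero k hk) h.symm
  · exact (pow_half_ne_zero k hk) h
lemma phi_sum (k : ℕ) (hk : 1 ≤ k) {α : Type*} (s : Finset α) (f : α → ZMod (2 ^ 1)) :
    phi k (∑ a ∈ s, f a) = ∑ a ∈ s, phi k (f a) := by
  classical
  induction s using Finset.induction_on with
  | empty => simp [phi_zero]
  | @insert a s ha ih =>
    rw [Finset.sum_insert ha, Finset.sum_insert ha, phi_add k hk, ih]
lemma evalML_phi {n k : ℕ} (hk : 1 ≤ k) (e : Finset (Fin n) → ZMod (2 ^ 1))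
    (x : Fin n → Bool) :
    evalML (fun S => phi k (e S)) x = phi k (evalML e x) := by
  unfold evalML
  rw [phi_sum k hk]
  apply Finset.sum_congr rfl
  intro S _
  rw [Finset.prod_boole, Finset.prod_boole]
  by_cases hc : ∀ i ∈ S, x i = true
  · rw [if_pos hc, if_pos hc, mul_one, mul_one]
  · rw [if_neg hc, if_neg hc, mul_zero, mul_zero, phi_zero]

lemma lift_phi {n : ℕ} (k : ℕ) (hk : 1 ≤ k) (F : (Fin n → Bool) → Bool) (x : Fin n → Bool) :
    lift k F x = phi k (lift 1 F x) := by
  unfold lift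
  by_cases hF : F x
  · rw [if_pos hF, if_pos hF, show ((2:ZMod (2^1)) ^ (1-1)) = 1 from by decide, phi_one]
  · rw [if_neg hF, if_neg hF, phi_zero]

lemma agr_phi {n k : ℕ} (hk : 1 ≤ k) (F : (Fin n → Bool) → Bool)
    (e : Finset (Fin n) → ZMod (2 ^ 1)) :
    agrCount k F (fun S => phi k (e S)) = agrCount 1 F e := by
  unfold agrCount
  congr 1
  apply Finset.filter_congr
  intro x _
  rw [evalML_phi hk, lift_phi k hk]
  constructor
  · exact fun h => phi_inj k hk h
  · exact fun h => by rw [h]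

/-- Key: any polynomial mod 2^k with large agreement is the lift of an F₂ polynomial. -/
lemma main_le {n d k : ℕ} (hk : 1 ≤ k) (F : (Fin n → Bool) → Bool)
    (c : Finset (Fin n) → ZMod (2 ^ k)) (hdeg : ∀ S, c S ≠ 0 → S.card ≤ d)
    (hbig : (2 ^ d - 1) * 2 ^ n < 2 ^ d * agrCount k F c) :
    ∃ e : Finset (Fin n) → ZMod (2 ^ 1),
      (∀ S, e S ≠ 0 → S.card ≤ d) ∧ agrCount 1 F e = agrCount k F c := by
  classical
  haveI : NeZero ((2:ℕ) ^ k) := ⟨by positivity⟩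
  haveI : NeZero ((2:ℕ) ^ (k-1)) := ⟨by positivity⟩
  set π : ZMod (2 ^ k) →+* ZMod (2 ^ (k - 1)) :=
    ZMod.castHom (pow_dvd_pow 2 (show k - 1 ≤ k from Nat.sub_le k 1)) (ZMod (2 ^ (k - 1)))
    with hπ
  have hπpow : π (2 ^ (k - 1)) = 0 := by
    rw [map_pow, map_ofNat]
    have := ZMod.natCast_self (2 ^ (k - 1))
    push_cast at this
    exact this
  have hπlift : ∀ x, π (lift k F x) = 0 := by
    intro x
    unfold lift
    by_cases hF : F x
    · rw [if_pos hF, hπpow]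
    · rw [if_neg hF, map_zero]
  -- all coefficients vanish mod 2^(k-1)
  have hzero : ∀ S, π (c S) = 0 := by
    by_contra hcon
    push_neg at hcon
    obtain ⟨S₀, hS₀⟩ := hcon
    have hsupp : ∀ S, π (c S) ≠ 0 → S ⊆ (Finset.univ : Finset (Fin n)) ∧ S.card ≤ d := by
      intro S hS
      refine ⟨Finset.subset_univ S, hdeg S fun hz => hS (by rw [hz, map_zero])⟩
    have hsz := sz Finset.univ d (fun S => π (c S)) hsupp ⟨S₀, hS₀⟩
    rw [Finset.card_fin, Finset.powerset_univ] at hsz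
    rw [count_transfer (fun T : Finset (Fin n) => ∑ S ∈ T.powerset, π (c S) ≠ 0)] at hsz
    have hfe : (Finset.univ.filter
          (fun x : Fin n → Bool =>
            ∑ S ∈ (Finset.univ.filter (fun i => x i = true)).powerset, π (c S) ≠ 0))
        = Finset.univ.filter (fun x : Fin n → Bool => π (evalML c x) ≠ 0) := by
      apply Finset.filter_congr
      intro x _
      rw [evalML_eq, map_sum]
    rw [hfe] at hsz
    -- the bad set avoids the agreement set
    have hsub : Finset.univ.filter (fun x : Fin n → Bool => π (evalML c x) ≠ 0)
        ⊆ Finset.univ \ Finset.univ.filter (fun x : Fin n → Bool => evalML c x = lift k F x) := by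
      intro x hx
      simp only [Finset.mem_filter, Finset.mem_univ, true_and, Finset.mem_sdiff] at hx ⊢
      exact fun hagr => hx (by rw [hagr, hπlift])
    have hcard := Finset.card_le_card hsub
    rw [Finset.card_sdiff_of_subset (Finset.subset_univ _)] at hcard
    have hcube : (Finset.univ : Finset (Fin n → Bool)).card = 2 ^ n := by
      simp [Finset.card_univ]
    rw [hcube] at hcard
    have hA : agrCount k F c ≤ 2 ^ n := by
      rw [← hcube]
      exact Finset.card_le_card (Finset.filter_subset _ _)
    -- arithmetic contradiction
    have key : 2 ^ d * agrCount k F c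
        + 2 ^ d * (2 ^ n - agrCount k F c) = 2 ^ d * 2 ^ n := by
      rw [← Nat.mul_add, Nat.add_sub_cancel' hA]
    have key2 : (2 ^ d - 1) * 2 ^ n + 2 ^ n = 2 ^ d * 2 ^ n := by
      have h1 : (1:ℕ) ≤ 2 ^ d := Nat.one_le_two_pow
      rw [Nat.sub_mul, one_mul]
      have h2 : (2:ℕ) ^ n ≤ 2 ^ d * 2 ^ n := Nat.le_mul_of_pos_left _ (by positivity)
      omega
    have hle : 2 ^ n ≤ 2 ^ d * (2 ^ n - agrCount k F c) :=
      le_trans hsz (Nat.mul_le_mul_left _ hcard)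
    unfold agrCount at hbig
    unfold agrCount at key hA hle
    linarith
  -- so each coefficient is 0 or 2^(k-1)
  have hdich : ∀ S, c S = 0 ∨ c S = 2 ^ (k - 1) := by
    intro S
    have h0 := hzero S
    rw [hπ, ZMod.castHom_apply] at h0
    have hval : (((c S).val : ℕ) : ZMod (2 ^ (k - 1))) = 0 := by
      rw [ZMod.natCast_val]
      exact h0
    rw [ZMod.natCast_eq_zero_iff] at hval
    obtain ⟨m, hm⟩ := hval
    have hlt : (c S).val < 2 ^ k := ZMod.val_lt (c S)
    have h2k : (2:ℕ) ^ k = 2 ^ (k - 1) * 2 := by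
      rw [← pow_succ]
      congr 1
      omega
    have hm2 : m < 2 := by
      by_contra hm2
      push_neg at hm2
      have : 2 ^ (k-1) * 2 ≤ 2 ^ (k-1) * m := Nat.mul_le_mul_left _ hm2
      omega
    interval_cases m
    · left
      have : (c S).val = 0 := by omega
      exact (ZMod.val_eq_zero _).mp this
    · right
      have hv : (c S).val = 2 ^ (k - 1) := by omega
      calc c S = (((c S).val : ℕ) : ZMod (2 ^ k)) := (ZMod.natCast_rightInverse (c S)).symm
        _ = ((2 ^ (k - 1) : ℕ) : ZMod (2 ^ k)) := by rw [hv]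
        _ = 2 ^ (k - 1) := by push_cast; ring
  refine ⟨fun S => if c S = 0 then 0 else 1, ?_, ?_⟩
  · intro S hS
    apply hdeg
    intro hz
    exact hS (by show (if c S = 0 then (0 : ZMod (2^1)) else 1) = 0; rw [if_pos hz])
  · have hc : c = fun S => phi k (if c S = 0 then 0 else 1) := by
      funext S
      by_cases hz : c S = 0
      · rw [if_pos hz, phi_zero, hz]
      · rw [if_neg hz, phi_one]
        rcases hdich S with h | h
        · exact absurd h hz
        · exact h
    conv_rhs => rw [hc]
    exact (agr_phi hk F _).symm

end Aux

/-- If `γ_{d,k}(F) > 1 - 2^{-d}` then `γ_{d,k}(F) = γ_{d,1}(F)`. -/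
theorem stmt10 (n d k : ℕ) (hd : 1 ≤ d) (hk : 1 ≤ k) (F : (Fin n → Bool) → Bool)
    (h : (2 ^ d - 1) * 2 ^ n < 2 ^ d * gamma n d k F) :
    gamma n d k F = gamma n d 1 F := by
  classical
  have hne : ∀ k', ((Finset.univ : Finset (Finset (Fin n) → ZMod (2 ^ k'))).filter
      (fun c => ∀ S, c S ≠ 0 → S.card ≤ d)).Nonempty := by
    intro k'
    exact ⟨fun _ => 0, by simp⟩
  apply le_antisymm
  · -- γ_k ≤ γ_1
    obtain ⟨c, hcmem, hcsup⟩ := Finset.exists_mem_eq_sup _ (hne k) (agrCount k F)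
    rw [gamma, hcsup]
    simp only [Finset.mem_filter, Finset.mem_univ, true_and] at hcmem
    have hbig : (2 ^ d - 1) * 2 ^ n < 2 ^ d * agrCount k F c := by
      rw [gamma, hcsup] at h
      exact h
    obtain ⟨e, hedeg, heagr⟩ := main_le hk F c hcmem hbig
    rw [← heagr]
    exact Finset.le_sup (Finset.mem_filter.mpr ⟨Finset.mem_univ _, hedeg⟩)
  · -- γ_1 ≤ γ_k
    obtain ⟨e, hemem, hesup⟩ := Finset.exists_mem_eq_sup _ (hne 1) (agrCount 1 F)
    rw [gamma, hesup]
    simp only [Finset.mem_filter, Finset.mem_univ, true_and] at hemem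
    have hmem : (fun S => phi k (e S)) ∈ (Finset.univ : Finset (Finset (Fin n) → ZMod (2 ^ k))).filter
        (fun c => ∀ S, c S ≠ 0 → S.card ≤ d) := by
      refine Finset.mem_filter.mpr ⟨Finset.mem_univ _, fun S hS => ?_⟩
      apply hemem
      intro hz
      exact hS (by show phi k (e S) = 0; rw [hz, phi_zero])
    have := Finset.le_sup (f := agrCount k F) hmem
    rw [agr_phi hk F e] at this
    exact this
end

section
/- Let ℓ ≥ 2 and d = 2^{ℓ−1} + 2^{ℓ−2}. For x ∈ {0,1}^n, letting B(x) denote the number of borrows when subtracting d from |x| in base 2: if |x|_{ℓ−2} = 0 and |x|_ℓ = 1 then B(x) = 2, and if either (|x|_{ℓ−2} = 0 and |x|_ℓ = 0) or (|x|_{ℓ−2}, |x|_{ℓ−1}, |x|_ℓ, |x|_{ℓ+1}) = (1,0,0,0), then B(x) ≥ 3. Here we assume |x| ≥ d. -/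
/-- Hamming weight of a Boolean vector. -/
def wt {n : ℕ} (x : Fin n → Bool) : ℕ :=
  (Finset.univ.filter (fun i => x i = true)).card

/-- `carryAux p a b i` is the carry into position `i` when adding `a` and `b` in base `p`. -/
def carryAux (p a b : ℕ) : ℕ → ℕ
  | 0 => 0
  | (i + 1) => if p ≤ a / p ^ i % p + b / p ^ i % p + carryAux p a b i then 1 else 0

/-- The number of borrows when subtracting `d` from `N` in base 2, i.e. the number of
carries when adding `d` and `N - d` in base 2. -/
def borrows (d N : ℕ) : ℕ :=
  ∑ i ∈ Finset.range (N + 1), carryAux 2 d (N - d) (i + 1)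

lemma carryAux_eq {p : ℕ} (hp : 2 ≤ p) (a b : ℕ) :
    ∀ i, carryAux p a b i = (a % p ^ i + b % p ^ i) / p ^ i := by
  intro i
  induction i with
  | zero => simp [carryAux, Nat.mod_one]
  | succ i ih =>
    have hpi : 0 < p ^ i := Nat.pow_pos (by omega)
    have hA : a % p ^ i < p ^ i := Nat.mod_lt _ hpi
    have hB : b % p ^ i < p ^ i := Nat.mod_lt _ hpi
    have hda : a / p ^ i % p < p := Nat.mod_lt _ (by omega)
    have hdb : b / p ^ i % p < p := Nat.mod_lt _ (by omega)
    have hma : a % p ^ (i+1) = a % p ^ i + p ^ i * (a / p ^ i % p) := by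
      rw [pow_succ]; exact Nat.mod_mul
    have hmb : b % p ^ (i+1) = b % p ^ i + p ^ i * (b / p ^ i % p) := by
      rw [pow_succ]; exact Nat.mod_mul
    have hc : (a % p ^ i + b % p ^ i) / p ^ i ≤ 1 := by
      apply Nat.lt_succ_iff.mp
      rw [Nat.div_lt_iff_lt_mul hpi]; omega
    set c := (a % p ^ i + b % p ^ i) / p ^ i with hcdef
    have hr : a % p ^ i + b % p ^ i = p ^ i * c + (a % p ^ i + b % p ^ i) % p ^ i := by
      rw [hcdef]; exact (Nat.div_add_mod _ _).symm
    set r := (a % p ^ i + b % p ^ i) % p ^ i with hrdef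
    have hrlt : r < p ^ i := Nat.mod_lt _ hpi
    set S := a / p ^ i % p + b / p ^ i % p + c with hS
    have key : a % p ^ (i+1) + b % p ^ (i+1) = p ^ i * S + r := by
      rw [hma, hmb, hS]; ring_nf; omega
    have hrhs : (a % p ^ (i+1) + b % p ^ (i+1)) / p ^ (i+1) = S / p := by
      rw [key, pow_succ, ← Nat.div_div_eq_div_mul, Nat.mul_add_div hpi,
        Nat.div_eq_of_lt hrlt, add_zero]
    rw [carryAux, ih, hrhs]
    rcases le_or_gt p S with h | h
    · have h1 : 1 ≤ S / p := (Nat.one_le_div_iff (by omega)).mpr h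
      have h2 : S / p < 2 := by rw [Nat.div_lt_iff_lt_mul (by omega : 0 < p)]; omega
      rw [if_pos h]; omega
    · rw [Nat.div_eq_of_lt h, if_neg (by omega)]

lemma carry_sub {d N : ℕ} (hdN : d ≤ N) (i : ℕ) :
    carryAux 2 d (N - d) i = if N % 2 ^ i < d % 2 ^ i then 1 else 0 := by
  have hpi : 0 < 2 ^ i := Nat.pow_pos (by omega)
  rw [carryAux_eq (le_refl 2)]
  have hA : d % 2 ^ i < 2 ^ i := Nat.mod_lt _ hpi
  have hB : (N - d) % 2 ^ i < 2 ^ i := Nat.mod_lt _ hpi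
  have hmod : (d % 2 ^ i + (N - d) % 2 ^ i) % 2 ^ i = N % 2 ^ i := by
    rw [← Nat.add_mod, Nat.add_sub_cancel' hdN]
  have hNl : N % 2 ^ i < 2 ^ i := Nat.mod_lt _ hpi
  set q := (d % 2 ^ i + (N - d) % 2 ^ i) / 2 ^ i with hq
  have hdm : 2 ^ i * q + N % 2 ^ i = d % 2 ^ i + (N - d) % 2 ^ i := by
    rw [hq, ← hmod]; exact Nat.div_add_mod _ _
  have hq1 : q ≤ 1 := by
    apply Nat.lt_succ_iff.mp; rw [hq, Nat.div_lt_iff_lt_mul hpi]; omega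
  interval_cases q <;> split_ifs <;> omega

lemma testBit_false_lt {m j : ℕ} (hm : m < 2 ^ (j + 1)) (h : m.testBit j = false) :
    m < 2 ^ j := by
  by_contra hc
  push_neg at hc
  have hp : (0:ℕ) < 2 ^ j := Nat.pow_pos (by omega)
  have h1 : 1 ≤ m / 2 ^ j := (Nat.one_le_div_iff hp).mpr hc
  have h2 : m / 2 ^ j < 2 := by
    rw [Nat.div_lt_iff_lt_mul hp]
    have : (2:ℕ) ^ (j+1) = 2 ^ j * 2 := by ring
    omega
  rw [Nat.testBit_eq_decide_div_mod_eq] at h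
  simp only [decide_eq_false_iff_not] at h
  omega

lemma lt_d_of_bit {m k : ℕ} (hm : m < 2 ^ (k + 2)) (h : m.testBit k = false) :
    m < 2 ^ (k + 1) + 2 ^ k := by
  have hpk1 : (0:ℕ) < 2 ^ (k+1) := Nat.pow_pos (by omega)
  have h1 : m % 2 ^ (k + 1) < 2 ^ k := by
    apply testBit_false_lt (Nat.mod_lt _ hpk1)
    simp [Nat.testBit_mod_two_pow, h]
  have h2 : m / 2 ^ (k + 1) ≤ 1 := by
    apply Nat.lt_succ_iff.mp
    rw [Nat.div_lt_iff_lt_mul hpk1]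
    have : (2:ℕ) ^ (k+2) = 2 ^ (k+1) * 2 := by ring
    omega
  have h3 := Nat.div_add_mod m (2 ^ (k + 1))
  set q := m / 2 ^ (k+1)
  interval_cases q <;> omega

lemma two_pow_le_mod {N j m : ℕ} (h : j < m) (hb : N.testBit j = true) :
    2 ^ j ≤ N % 2 ^ m := by
  apply Nat.ge_two_pow_of_testBit
  simp [Nat.testBit_mod_two_pow, h, hb]

/-- Let `ℓ ≥ 2`, `d = 2^{ℓ-1} + 2^{ℓ-2}`, and `B(x)` the number of borrows when
subtracting `d` from `|x|` in base 2 (where `|x| ≥ d`). If `|x|_{ℓ-2} = 0` and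
`|x|_ℓ = 1` then `B(x) = 2`; if `|x|_{ℓ-2} = 0` and `|x|_ℓ = 0`, or
`(|x|_{ℓ-2}, |x|_{ℓ-1}, |x|_ℓ, |x|_{ℓ+1}) = (1,0,0,0)`, then `B(x) ≥ 3`. -/
theorem stmt12 (ℓ n : ℕ) (hl : 2 ≤ ℓ) (x : Fin n → Bool)
    (hw : 2 ^ (ℓ - 1) + 2 ^ (ℓ - 2) ≤ wt x) :
    ((wt x).testBit (ℓ - 2) = false ∧ (wt x).testBit ℓ = true →
        borrows (2 ^ (ℓ - 1) + 2 ^ (ℓ - 2)) (wt x) = 2) ∧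
    (((wt x).testBit (ℓ - 2) = false ∧ (wt x).testBit ℓ = false) ∨
        ((wt x).testBit (ℓ - 2) = true ∧ (wt x).testBit (ℓ - 1) = false ∧
          (wt x).testBit ℓ = false ∧ (wt x).testBit (ℓ + 1) = false) →
      3 ≤ borrows (2 ^ (ℓ - 1) + 2 ^ (ℓ - 2)) (wt x)) := by
  obtain ⟨k, rfl⟩ : ∃ k, ℓ = k + 2 := ⟨ℓ - 2, by omega⟩
  have e1 : k + 2 - 1 = k + 1 := by omega
  have e2 : k + 2 - 2 = k := by omega
  rw [e1, e2] at hw ⊢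
  set N := wt x with hN
  set d := 2 ^ (k + 1) + 2 ^ k with hd
  have p0 : (0:ℕ) < 2 ^ k := Nat.pow_pos (by omega)
  have p1 : (2:ℕ) ^ (k+1) = 2 * 2 ^ k := by ring
  have p2 : (2:ℕ) ^ (k+2) = 4 * 2 ^ k := by ring
  have p3 : (2:ℕ) ^ (k+3) = 8 * 2 ^ k := by ring
  have p4 : (2:ℕ) ^ (k+4) = 16 * 2 ^ k := by ring
  have hk2 : k < 2 ^ k := Nat.lt_two_pow_self
  have hNk : k + 3 ≤ N := by omega
  -- d mod facts
  have hd0 : ∀ i : ℕ, i + 1 ≤ k → d % 2 ^ (i+1) = 0 := by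
    intro i hi
    exact Nat.mod_eq_zero_of_dvd
      (dvd_add (pow_dvd_pow 2 (by omega)) (pow_dvd_pow 2 (by omega)))
  have hd1 : d % 2 ^ (k+1) = 2 ^ k := by
    have : d = 2 ^ k * 3 := by rw [hd]; ring
    rw [this, p1, Nat.mul_comm 2 (2^k), Nat.mul_mod_mul_left]
    norm_num
  have hd2 : ∀ i : ℕ, k + 2 ≤ i → d % 2 ^ i = d := by
    intro i hi
    apply Nat.mod_eq_of_lt
    calc d < 2 ^ (k+2) := by omega
    _ ≤ 2 ^ i := Nat.pow_le_pow_right (by omega) hi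
  have hdN : d ≤ N := hw
  -- the per-index carry description
  have hcarry : ∀ i : ℕ, carryAux 2 d (N - d) (i+1)
      = if N % 2 ^ (i+1) < d % 2 ^ (i+1) then 1 else 0 := fun i => carry_sub hdN (i+1)
  constructor
  · rintro ⟨h0, h2⟩
    have hfun : ∀ i ∈ Finset.range (N+1), carryAux 2 d (N - d) (i+1)
        = (if i = k then 1 else 0) + (if i = k+1 then 1 else 0) := by
      intro i _
      rw [hcarry i]
      rcases lt_trichotomy i k with hik | rfl | hik
      · rw [hd0 i (by omega), if_neg (by omega), if_neg (by omega), if_neg (by omega)]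
      · rw [hd1, if_pos, if_pos rfl, if_neg (by omega)]
        exact testBit_false_lt (Nat.mod_lt _ (by positivity))
          (by simp [Nat.testBit_mod_two_pow, h0])
      · rcases Nat.eq_or_lt_of_le hik with rfl | hik2
        · rw [hd2 _ (by omega), if_pos, if_neg (by omega), if_pos rfl]
          exact lt_d_of_bit (Nat.mod_lt _ (by positivity))
            (by simp [Nat.testBit_mod_two_pow, h0])
        · rw [hd2 _ (by omega), if_neg, if_neg (by omega), if_neg (by omega)]
          push_neg
          exact le_of_lt (lt_of_lt_of_le (by omega : d < 2 ^ (k+2))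
            (two_pow_le_mod (by omega) h2))
    rw [borrows, Finset.sum_congr rfl hfun, Finset.sum_add_distrib,
      Finset.sum_ite_eq' _ k (fun _ => 1), Finset.sum_ite_eq' _ (k+1) (fun _ => 1),
      if_pos (Finset.mem_range.mpr (by omega)), if_pos (Finset.mem_range.mpr (by omega))]
  · intro hcase
    rcases hcase with ⟨h0, h2⟩ | ⟨h0, h1, h2, h3⟩
    · -- bit k = 0, bit k+2 = 0 : carries at positions k+1, k+2, k+3 (indices k, k+1, k+2)
      have ck : carryAux 2 d (N - d) (k+1) = 1 := by
        rw [hcarry k, hd1, if_pos]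
        exact testBit_false_lt (Nat.mod_lt _ (by positivity))
          (by simp [Nat.testBit_mod_two_pow, h0])
      have ck1 : carryAux 2 d (N - d) (k+2) = 1 := by
        rw [hcarry (k+1), hd2 _ (by omega), if_pos]
        exact lt_d_of_bit (Nat.mod_lt _ (by positivity))
          (by simp [Nat.testBit_mod_two_pow, h0])
      have ck2 : carryAux 2 d (N - d) (k+3) = 1 := by
        rw [hcarry (k+2), hd2 _ (by omega), if_pos]
        have hlt : N % 2 ^ (k+3) < 2 ^ (k+2) := by
          apply testBit_false_lt
          · exact Nat.mod_lt _ (by positivity)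
          · simp [Nat.testBit_mod_two_pow, h2]
        exact lt_d_of_bit hlt (by simp [Nat.testBit_mod_two_pow, h0])
      have hsub : ({k, k+1, k+2} : Finset ℕ) ⊆ Finset.range (N+1) := by
        intro i hi
        simp only [Finset.mem_insert, Finset.mem_singleton] at hi
        rw [Finset.mem_range]; omega
      calc (3:ℕ) = ∑ i ∈ ({k, k+1, k+2} : Finset ℕ), carryAux 2 d (N - d) (i+1) := by
            rw [Finset.sum_insert (by simp only [Finset.mem_insert, Finset.mem_singleton]; omega),
              Finset.sum_insert (by simp only [Finset.mem_singleton]; omega),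
              Finset.sum_singleton, ck, ck1, ck2]
            norm_num
        _ ≤ ∑ i ∈ Finset.range (N+1), carryAux 2 d (N - d) (i+1) :=
            Finset.sum_le_sum_of_subset hsub
        _ = borrows d N := rfl
    · -- bits (k,k+1,k+2,k+3) = (1,0,0,0) : carries at positions k+2, k+3, k+4
      have key : ∀ j : ℕ, k + 2 ≤ j → j ≤ k + 4 → N % 2 ^ j < d := by
        intro j hj1 hj2
        have step : ∀ m : ℕ, k + 1 ≤ m → m ≤ k + 3 → N % 2 ^ (m+1) < 2 ^ (m+1) →
            N.testBit m = false → N % 2 ^ (m+1) < 2 ^ m := by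
          intro m hm1 hm2 hlt hb
          apply testBit_false_lt hlt
          simp [Nat.testBit_mod_two_pow, hb]
        have final : N % 2 ^ j < 2 ^ (k+1) := by
          obtain rfl | rfl | rfl : j = k + 2 ∨ j = k + 3 ∨ j = k + 4 := by omega
          · exact step (k+1) (by omega) (by omega) (Nat.mod_lt _ (by positivity)) h1
          · have s1 : N % 2 ^ (k+3) < 2 ^ (k+2) :=
              step (k+2) (by omega) (by omega) (Nat.mod_lt _ (by positivity)) h2
            exact testBit_false_lt s1 (by simp [Nat.testBit_mod_two_pow, h1])
          · have s1 : N % 2 ^ (k+4) < 2 ^ (k+3) :=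
              step (k+3) (by omega) (by omega) (Nat.mod_lt _ (by positivity)) h3
            have s2 : N % 2 ^ (k+4) < 2 ^ (k+2) :=
              testBit_false_lt s1 (by simp [Nat.testBit_mod_two_pow, h2])
            exact testBit_false_lt s2 (by simp [Nat.testBit_mod_two_pow, h1])
        omega
      have ck1 : carryAux 2 d (N - d) (k+2) = 1 := by
        rw [hcarry (k+1), hd2 _ (by omega), if_pos (key (k+2) (by omega) (by omega))]
      have ck2 : carryAux 2 d (N - d) (k+3) = 1 := by
        rw [hcarry (k+2), hd2 _ (by omega), if_pos (key (k+3) (by omega) (by omega))]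
      have ck3 : carryAux 2 d (N - d) (k+4) = 1 := by
        rw [hcarry (k+3), hd2 _ (by omega), if_pos (key (k+4) (by omega) (by omega))]
      have hsub : ({k+1, k+2, k+3} : Finset ℕ) ⊆ Finset.range (N+1) := by
        intro i hi
        simp only [Finset.mem_insert, Finset.mem_singleton] at hi
        rw [Finset.mem_range]; omega
      calc (3:ℕ) = ∑ i ∈ ({k+1, k+2, k+3} : Finset ℕ), carryAux 2 d (N - d) (i+1) := by
            rw [Finset.sum_insert (by simp only [Finset.mem_insert, Finset.mem_singleton]; omega),
              Finset.sum_insert (by simp only [Finset.mem_singleton]; omega),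
              Finset.sum_singleton, ck1, ck2, ck3]
            norm_num
        _ ≤ ∑ i ∈ Finset.range (N+1), carryAux 2 d (N - d) (i+1) :=
            Finset.sum_le_sum_of_subset hsub
        _ = borrows d N := rfl
end

section
/- Let ℓ ≥ 2 and d = 2^{ℓ−1} + 2^{ℓ−2}. Let N ≥ d be an integer and write N_i for the (i+1)-th least significant bit of N. If N_{ℓ−2} = 0, or if (N_{ℓ−2}, N_{ℓ−1}, N_ℓ, N_{ℓ+1}) = (1,0,0,0), then C(N, d) mod 8 equals 4·N_ℓ, i.e., it is 4 when N_ℓ = 1 (and N_{ℓ−2}=0) and 0 when N_ℓ = 0. -/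
private lemma mod_of_decomp (n q c l : ℕ) (h : n = q * c + l) (hl : l < c) : n % c = l := by
  subst h
  rw [mul_comm, Nat.mul_add_mod, Nat.mod_eq_of_lt hl]

private lemma modh (a l c m : ℕ) (hl : l < c) (hm : 0 < m) :
    (a * c + l) % (c * m) = a % m * c + l := by
  have h1 : a * c + l = (c * m) * (a / m) + (a % m * c + l) := by
    conv_lhs => rw [← Nat.div_add_mod a m]
    ring
  have h2 : a % m * c + l < c * m := by
    have hlt := Nat.mod_lt a hm
    calc a % m * c + l < a % m * c + c := by omega
      _ = (a % m + 1) * c := by ring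
      _ ≤ m * c := Nat.mul_le_mul_right c (by omega)
      _ = c * m := by ring
  rw [h1, Nat.mul_add_mod, Nat.mod_eq_of_lt h2]

/-- In case bit k of N is 0 and bit (k+2) of N is 1, the 2-adic valuation of
`C(N, 3·2^k)` is exactly 2. -/
private lemma core1 (k N : ℕ) (h0 : N / 2 ^ k % 2 = 0) (h2 : N / 2 ^ (k + 2) % 2 = 1)
    (hN : 3 * 2 ^ k ≤ N) : padicValNat 2 (N.choose (3 * 2 ^ k)) = 2 := by
  have hkx : k < 2 ^ k := (Nat.lt_two_pow_self (n := k))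
  obtain ⟨x, hxdef⟩ : ∃ x, (2:ℕ) ^ k = x := ⟨_, rfl⟩
  rw [hxdef] at h0 hN hkx ⊢
  have hx : 0 < x := by omega
  have p1 : (2:ℕ) ^ (k + 1) = 2 * x := by rw [← hxdef]; ring
  have p2 : (2:ℕ) ^ (k + 2) = 4 * x := by rw [← hxdef]; ring
  have p3 : ∀ j, (2:ℕ) ^ (k + 3 + j) = 8 * x * 2 ^ j := fun j => by rw [← hxdef]; ring
  obtain ⟨r, hr⟩ : ∃ r, N % x = r := ⟨_, rfl⟩
  have hrlt : r < x := hr ▸ Nat.mod_lt _ hx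
  obtain ⟨b1, hb1⟩ : ∃ b1, N / (x * 2) % 2 = b1 := ⟨_, rfl⟩
  have hb1lt : b1 < 2 := hb1 ▸ Nat.mod_lt _ (by norm_num)
  obtain ⟨A, hA⟩ : ∃ A, N / (x * 8) = A := ⟨_, rfl⟩
  have e0 : N = N / x * x + r := by rw [← hr]; exact (Nat.div_add_mod' N x).symm
  have e1 : N / x = N / (x * 2) * 2 := by
    have hd : N / x / 2 = N / (x * 2) := Nat.div_div_eq_div_mul N x 2
    omega
  have e2 : N / (x * 2) = N / (x * 4) * 2 + b1 := by
    have hd : N / (x * 2) / 2 = N / (x * 4) := by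
      rw [Nat.div_div_eq_div_mul, show x * 2 * 2 = x * 4 by ring]
    omega
  have e3 : N / (x * 4) = A * 2 + 1 := by
    have hd : N / (x * 4) / 2 = N / (x * 8) := by
      rw [Nat.div_div_eq_div_mul, show x * 4 * 2 = x * 8 by ring]
    have h2' : N / (x * 4) % 2 = 1 := by rwa [p2, show (4:ℕ) * x = x * 4 by ring] at h2
    omega
  have hNd : N = A * (8 * x) + 4 * x + b1 * (2 * x) + r := by
    rw [e0, e1, e2, e3]; ring
  have hMd : N - 3 * x = A * (8 * x) + b1 * (2 * x) + x + r := by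
    apply Nat.sub_eq_of_eq_add
    rw [hNd]; ring
  have hlog : Nat.log 2 N < N + 1 := Nat.lt_succ_of_le (Nat.log_le_self 2 N)
  rw [padicValNat_choose hN hlog]
  have hset : ((Finset.Ico 1 (N + 1)).filter
      fun i => 2 ^ i ≤ 3 * x % 2 ^ i + (N - 3 * x) % 2 ^ i) = {k + 1, k + 2} := by
    ext i
    simp only [Finset.mem_filter, Finset.mem_Ico, Finset.mem_insert, Finset.mem_singleton]
    constructor
    · rintro ⟨⟨hi1, hib⟩, hcond⟩
      by_contra hne
      push_neg at hne
      rcases lt_or_ge i (k + 1) with hik | hik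
      · have hdvd : (2:ℕ) ^ i ∣ 3 * x := by
          rw [← hxdef]
          exact Dvd.dvd.mul_left (pow_dvd_pow 2 (by omega)) 3
        rw [Nat.mod_eq_zero_of_dvd hdvd] at hcond
        have := Nat.mod_lt (N - 3 * x) (pow_pos (show (0:ℕ) < 2 by norm_num) i)
        omega
      · obtain ⟨j, rfl⟩ : ∃ j, i = k + 3 + j := ⟨i - (k + 3), by omega⟩
        have hy : 0 < 2 ^ j := pow_pos (by norm_num) j
        have hL : b1 * (2 * x) + x + r < 8 * x := by
          interval_cases b1 <;> omega
        rw [p3 j, hMd, show A * (8 * x) + b1 * (2 * x) + x + r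
            = A * (8 * x) + (b1 * (2 * x) + x + r) by ring,
          modh A _ (8 * x) (2 ^ j) hL hy] at hcond
        have hd3 : 3 * x % (8 * x * 2 ^ j) = 3 * x := by
          apply Nat.mod_eq_of_lt
          have : 8 * x * 1 ≤ 8 * x * 2 ^ j := Nat.mul_le_mul_left _ hy
          omega
        rw [hd3] at hcond
        have key : (A % 2 ^ j) * (8 * x) + 8 * x ≤ 8 * x * 2 ^ j := by
          have hm := Nat.mod_lt A hy
          calc (A % 2 ^ j) * (8 * x) + 8 * x = (A % 2 ^ j + 1) * (8 * x) := by ring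
            _ ≤ 2 ^ j * (8 * x) := Nat.mul_le_mul_right _ (by omega)
            _ = 8 * x * 2 ^ j := by ring
        interval_cases b1 <;> omega
    · have hkN : k + 2 ≤ N := by omega
      rintro (rfl | rfl)
      · refine ⟨⟨by omega, by omega⟩, ?_⟩
        have hd : 3 * x % (2 * x) = x := mod_of_decomp _ 1 _ _ (by ring) (by omega)
        have hm : (N - 3 * x) % (2 * x) = x + r :=
          mod_of_decomp _ (A * 4 + b1) _ _ (by rw [hMd]; ring) (by omega)
        rw [p1, hd, hm]; omega
      · refine ⟨⟨by omega, by omega⟩, ?_⟩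
        have hd : 3 * x % (4 * x) = 3 * x := Nat.mod_eq_of_lt (by omega)
        have hm : (N - 3 * x) % (4 * x) = b1 * (2 * x) + x + r :=
          mod_of_decomp _ (A * 2) _ _ (by rw [hMd]; ring) (by interval_cases b1 <;> omega)
        rw [p2, hd, hm]
        interval_cases b1 <;> omega
  rw [hset, Finset.card_insert_of_notMem (by simp), Finset.card_singleton]

/-- In case bits k and k+2 of N are 0, the 2-adic valuation of `C(N, 3·2^k)` is at least 3. -/
private lemma core2 (k N : ℕ) (h0 : N / 2 ^ k % 2 = 0) (h2 : N / 2 ^ (k + 2) % 2 = 0)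
    (hN : 3 * 2 ^ k ≤ N) : 3 ≤ padicValNat 2 (N.choose (3 * 2 ^ k)) := by
  have hkx : k < 2 ^ k := (Nat.lt_two_pow_self (n := k))
  obtain ⟨x, hxdef⟩ : ∃ x, (2:ℕ) ^ k = x := ⟨_, rfl⟩
  rw [hxdef] at h0 hN hkx ⊢
  have hx : 0 < x := by omega
  have p1 : (2:ℕ) ^ (k + 1) = 2 * x := by rw [← hxdef]; ring
  have p2 : (2:ℕ) ^ (k + 2) = 4 * x := by rw [← hxdef]; ring
  have p3 : (2:ℕ) ^ (k + 3) = 8 * x := by rw [← hxdef]; ring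
  obtain ⟨r, hr⟩ : ∃ r, N % x = r := ⟨_, rfl⟩
  have hrlt : r < x := hr ▸ Nat.mod_lt _ hx
  obtain ⟨b1, hb1⟩ : ∃ b1, N / (x * 2) % 2 = b1 := ⟨_, rfl⟩
  have hb1lt : b1 < 2 := hb1 ▸ Nat.mod_lt _ (by norm_num)
  obtain ⟨A, hA⟩ : ∃ A, N / (x * 8) = A := ⟨_, rfl⟩
  have e0 : N = N / x * x + r := by rw [← hr]; exact (Nat.div_add_mod' N x).symm
  have e1 : N / x = N / (x * 2) * 2 := by
    have hd : N / x / 2 = N / (x * 2) := Nat.div_div_eq_div_mul N x 2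
    omega
  have e2 : N / (x * 2) = N / (x * 4) * 2 + b1 := by
    have hd : N / (x * 2) / 2 = N / (x * 4) := by
      rw [Nat.div_div_eq_div_mul, show x * 2 * 2 = x * 4 by ring]
    omega
  have e3 : N / (x * 4) = A * 2 := by
    have hd : N / (x * 4) / 2 = N / (x * 8) := by
      rw [Nat.div_div_eq_div_mul, show x * 4 * 2 = x * 8 by ring]
    have h2' : N / (x * 4) % 2 = 0 := by rwa [p2, show (4:ℕ) * x = x * 4 by ring] at h2
    omega
  have hNd : N = A * (8 * x) + b1 * (2 * x) + r := by
    rw [e0, e1, e2, e3]; ring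
  have hA1 : 1 ≤ A := by
    rcases Nat.eq_zero_or_pos A with hz | hp
    · rw [hz] at hNd
      interval_cases b1 <;> omega
    · exact hp
  obtain ⟨A', rfl⟩ : ∃ A', A = A' + 1 := ⟨A - 1, by omega⟩
  have hMd : N - 3 * x = A' * (8 * x) + 4 * x + b1 * (2 * x) + x + r := by
    apply Nat.sub_eq_of_eq_add
    rw [hNd]; ring
  have hlog : Nat.log 2 N < N + 1 := Nat.lt_succ_of_le (Nat.log_le_self 2 N)
  rw [padicValNat_choose hN hlog]
  have hkN : k + 3 ≤ N := by omega
  have hsub : ({k + 1, k + 2, k + 3} : Finset ℕ) ⊆ ((Finset.Ico 1 (N + 1)).filter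
      fun i => 2 ^ i ≤ 3 * x % 2 ^ i + (N - 3 * x) % 2 ^ i) := by
    rw [Finset.insert_subset_iff, Finset.insert_subset_iff, Finset.singleton_subset_iff]
    refine ⟨?_, ?_, ?_⟩ <;> rw [Finset.mem_filter, Finset.mem_Ico]
    · refine ⟨⟨by omega, by omega⟩, ?_⟩
      have hd : 3 * x % (2 * x) = x := mod_of_decomp _ 1 _ _ (by ring) (by omega)
      have hm : (N - 3 * x) % (2 * x) = x + r :=
        mod_of_decomp _ (A' * 4 + 2 + b1) _ _ (by rw [hMd]; ring) (by omega)
      rw [p1, hd, hm]; omega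
    · refine ⟨⟨by omega, by omega⟩, ?_⟩
      have hd : 3 * x % (4 * x) = 3 * x := Nat.mod_eq_of_lt (by omega)
      have hm : (N - 3 * x) % (4 * x) = b1 * (2 * x) + x + r :=
        mod_of_decomp _ (A' * 2 + 1) _ _ (by rw [hMd]; ring) (by interval_cases b1 <;> omega)
      rw [p2, hd, hm]
      interval_cases b1 <;> omega
    · refine ⟨⟨by omega, by omega⟩, ?_⟩
      have hd : 3 * x % (8 * x) = 3 * x := Nat.mod_eq_of_lt (by omega)
      have hm : (N - 3 * x) % (8 * x) = 4 * x + b1 * (2 * x) + x + r :=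
        mod_of_decomp _ A' _ _ (by rw [hMd]; ring) (by interval_cases b1 <;> omega)
      rw [p3, hd, hm]
      interval_cases b1 <;> omega
  calc 3 = ({k + 1, k + 2, k + 3} : Finset ℕ).card := by
        rw [Finset.card_insert_of_notMem (by simp), Finset.card_insert_of_notMem (by simp),
          Finset.card_singleton]
    _ ≤ _ := Finset.card_le_card hsub

/-- In case bits (k, k+1, k+2, k+3) of N are (1,0,0,0), the 2-adic valuation of
`C(N, 3·2^k)` is at least 3. -/
private lemma core3 (k N : ℕ) (h0 : N / 2 ^ k % 2 = 1) (h1 : N / 2 ^ (k + 1) % 2 = 0)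
    (h2 : N / 2 ^ (k + 2) % 2 = 0) (h3 : N / 2 ^ (k + 3) % 2 = 0)
    (hN : 3 * 2 ^ k ≤ N) : 3 ≤ padicValNat 2 (N.choose (3 * 2 ^ k)) := by
  have hkx : k < 2 ^ k := (Nat.lt_two_pow_self (n := k))
  obtain ⟨x, hxdef⟩ : ∃ x, (2:ℕ) ^ k = x := ⟨_, rfl⟩
  rw [hxdef] at h0 hN hkx ⊢
  have hx : 0 < x := by omega
  have p1 : (2:ℕ) ^ (k + 1) = 2 * x := by rw [← hxdef]; ring
  have p2 : (2:ℕ) ^ (k + 2) = 4 * x := by rw [← hxdef]; ring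
  have p3 : (2:ℕ) ^ (k + 3) = 8 * x := by rw [← hxdef]; ring
  have p4 : (2:ℕ) ^ (k + 4) = 16 * x := by rw [← hxdef]; ring
  obtain ⟨r, hr⟩ : ∃ r, N % x = r := ⟨_, rfl⟩
  have hrlt : r < x := hr ▸ Nat.mod_lt _ hx
  obtain ⟨A, hA⟩ : ∃ A, N / (x * 16) = A := ⟨_, rfl⟩
  have e0 : N = N / x * x + r := by rw [← hr]; exact (Nat.div_add_mod' N x).symm
  have e1 : N / x = N / (x * 2) * 2 + 1 := by
    have hd : N / x / 2 = N / (x * 2) := Nat.div_div_eq_div_mul N x 2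
    omega
  have e2 : N / (x * 2) = N / (x * 4) * 2 := by
    have hd : N / (x * 2) / 2 = N / (x * 4) := by
      rw [Nat.div_div_eq_div_mul, show x * 2 * 2 = x * 4 by ring]
    have h1' : N / (x * 2) % 2 = 0 := by rwa [p1, show (2:ℕ) * x = x * 2 by ring] at h1
    omega
  have e3 : N / (x * 4) = N / (x * 8) * 2 := by
    have hd : N / (x * 4) / 2 = N / (x * 8) := by
      rw [Nat.div_div_eq_div_mul, show x * 4 * 2 = x * 8 by ring]
    have h2' : N / (x * 4) % 2 = 0 := by rwa [p2, show (4:ℕ) * x = x * 4 by ring] at h2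
    omega
  have e4 : N / (x * 8) = A * 2 := by
    have hd : N / (x * 8) / 2 = N / (x * 16) := by
      rw [Nat.div_div_eq_div_mul, show x * 8 * 2 = x * 16 by ring]
    have h3' : N / (x * 8) % 2 = 0 := by rwa [p3, show (8:ℕ) * x = x * 8 by ring] at h3
    omega
  have hNd : N = A * (16 * x) + x + r := by
    rw [e0, e1, e2, e3, e4]; ring
  have hA1 : 1 ≤ A := by
    rcases Nat.eq_zero_or_pos A with hz | hp
    · rw [hz] at hNd; omega
    · exact hp
  obtain ⟨A', rfl⟩ : ∃ A', A = A' + 1 := ⟨A - 1, by omega⟩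
  have hMd : N - 3 * x = A' * (16 * x) + 8 * x + 4 * x + 2 * x + r := by
    apply Nat.sub_eq_of_eq_add
    rw [hNd]; ring
  have hlog : Nat.log 2 N < N + 1 := Nat.lt_succ_of_le (Nat.log_le_self 2 N)
  rw [padicValNat_choose hN hlog]
  have h16 : 16 * x ≤ (A' + 1) * (16 * x) := Nat.le_mul_of_pos_left _ (by omega)
  have hkN : k + 4 ≤ N := by omega
  have hsub : ({k + 2, k + 3, k + 4} : Finset ℕ) ⊆ ((Finset.Ico 1 (N + 1)).filter
      fun i => 2 ^ i ≤ 3 * x % 2 ^ i + (N - 3 * x) % 2 ^ i) := by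
    rw [Finset.insert_subset_iff, Finset.insert_subset_iff, Finset.singleton_subset_iff]
    refine ⟨?_, ?_, ?_⟩ <;> rw [Finset.mem_filter, Finset.mem_Ico]
    · refine ⟨⟨by omega, by omega⟩, ?_⟩
      have hd : 3 * x % (4 * x) = 3 * x := Nat.mod_eq_of_lt (by omega)
      have hm : (N - 3 * x) % (4 * x) = 2 * x + r :=
        mod_of_decomp _ (A' * 4 + 3) _ _ (by rw [hMd]; ring) (by omega)
      rw [p2, hd, hm]; omega
    · refine ⟨⟨by omega, by omega⟩, ?_⟩
      have hd : 3 * x % (8 * x) = 3 * x := Nat.mod_eq_of_lt (by omega)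
      have hm : (N - 3 * x) % (8 * x) = 4 * x + 2 * x + r :=
        mod_of_decomp _ (A' * 2 + 1) _ _ (by rw [hMd]; ring) (by omega)
      rw [p3, hd, hm]; omega
    · refine ⟨⟨by omega, by omega⟩, ?_⟩
      have hd : 3 * x % (16 * x) = 3 * x := Nat.mod_eq_of_lt (by omega)
      have hm : (N - 3 * x) % (16 * x) = 8 * x + 4 * x + 2 * x + r :=
        mod_of_decomp _ A' _ _ (by rw [hMd]; ring) (by omega)
      rw [p4, hd, hm]; omega
  calc 3 = ({k + 2, k + 3, k + 4} : Finset ℕ).card := by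
        rw [Finset.card_insert_of_notMem (by simp), Finset.card_insert_of_notMem (by simp),
          Finset.card_singleton]
    _ ≤ _ := Finset.card_le_card hsub

/-- Let `ℓ ≥ 2`, `d = 2^{ℓ-1} + 2^{ℓ-2}` and `N ≥ d`. If `N_{ℓ-2} = 0`, or
`(N_{ℓ-2}, N_{ℓ-1}, N_ℓ, N_{ℓ+1}) = (1,0,0,0)`, then `C(N, d) mod 8 = 4·N_ℓ`. -/
theorem stmt13 (ℓ N : ℕ) (hl : 2 ≤ ℓ) (hN : 2 ^ (ℓ - 1) + 2 ^ (ℓ - 2) ≤ N)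
    (h : N.testBit (ℓ - 2) = false ∨
      (N.testBit (ℓ - 2) = true ∧ N.testBit (ℓ - 1) = false ∧
        N.testBit ℓ = false ∧ N.testBit (ℓ + 1) = false)) :
    N.choose (2 ^ (ℓ - 1) + 2 ^ (ℓ - 2)) % 8 = if N.testBit ℓ then 4 else 0 := by
  obtain ⟨k, rfl⟩ : ∃ k, ℓ = k + 2 := ⟨ℓ - 2, by omega⟩
  have hcan : k + 2 - 1 = k + 1 := rfl
  have hcan2 : k + 2 - 2 = k := rfl
  rw [hcan, hcan2] at hN h ⊢
  rw [show (2:ℕ) ^ (k + 1) + 2 ^ k = 3 * 2 ^ k by ring] at hN ⊢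
  have hC0 : N.choose (3 * 2 ^ k) ≠ 0 := (Nat.choose_pos hN).ne'
  have bit0 : ∀ i, N.testBit i = false → N / 2 ^ i % 2 = 0 := by
    intro i hi
    have h' : ¬ (N / 2 ^ i % 2 = 1) := by simpa [Nat.testBit_eq_decide_div_mod_eq] using hi
    omega
  have bit1 : ∀ i, N.testBit i = true → N / 2 ^ i % 2 = 1 := by
    intro i hi
    simpa [Nat.testBit_eq_decide_div_mod_eq] using hi
  cases hb2 : N.testBit (k + 2) with
  | true =>
    rw [if_pos rfl]
    have h0 : N.testBit k = false := by
      rcases h with h | ⟨_, _, hc, _⟩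
      · exact h
      · rw [hb2] at hc; exact absurd hc (by simp)
    have hv := core1 k N (bit0 k h0) (bit1 (k + 2) hb2) hN
    have h4 : 2 ^ 2 ∣ N.choose (3 * 2 ^ k) := by
      have := pow_padicValNat_dvd (p := 2) (n := N.choose (3 * 2 ^ k))
      rwa [hv] at this
    have h8 : ¬ (2 ^ 3 ∣ N.choose (3 * 2 ^ k)) := by
      rw [padicValNat_dvd_iff_le hC0, hv]; omega
    norm_num at h4 h8
    omega
  | false =>
    rw [if_neg (by simp)]
    have h3 : 3 ≤ padicValNat 2 (N.choose (3 * 2 ^ k)) := by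
      rcases h with h0 | ⟨h0, h1, _, h3'⟩
      · exact core2 k N (bit0 k h0) (bit0 (k + 2) hb2) hN
      · have h3'' : N.testBit (k + 3) = false := by
          rw [show k + 3 = k + 2 + 1 by omega]; exact h3'
        exact core3 k N (bit1 k h0) (bit0 (k + 1) h1) (bit0 (k + 2) hb2)
          (bit0 (k + 3) h3'') hN
    have h8 : 2 ^ 3 ∣ N.choose (3 * 2 ^ k) := (padicValNat_dvd_iff_le hC0).mpr h3
    norm_num at h8
    omega
end

section
/- Any forcing set S for the class of multilinear polynomials of degree at most d in n variables over ℤ/2^kℤ satisfies |S| ≥ Σ_{i=0}^d C(n, i), the number of Boolean points of Hamming weight at most d. -/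
/-- Any forcing set for multilinear polynomials of degree at most `d` over `ℤ/2^kℤ`
has size at least `∑_{i ≤ d} C(n, i)`. Here "`S` is forcing" means: every such
polynomial vanishing on `S` takes values in the kernel of the projection
`π : ℤ/2^kℤ → ℤ/2ℤ` (i.e. `2^{k-1}·P(y) = 0`) at every Boolean point `y`. -/
theorem stmt15 (n d k : ℕ) (hk : 1 ≤ k) (S : Finset (Fin n → Bool))
    (hforcing : ∀ c : Finset (Fin n) → ZMod (2 ^ k),
      (∀ T, c T ≠ 0 → T.card ≤ d) → (∀ x ∈ S, evalML c x = 0) →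
      ∀ y : Fin n → Bool, (2 ^ (k - 1) : ZMod (2 ^ k)) * evalML c y = 0) :
    ∑ i ∈ Finset.range (d + 1), n.choose i ≤ S.card := by
  classical
  by_contra hlt
  push_neg at hlt
  set N := ∑ i ∈ Finset.range (d + 1), n.choose i with hN
  set M : Finset (Finset (Fin n)) := Finset.univ.filter (fun T => T.card ≤ d) with hM
  have hMcard : M.card = N := by
    have hMeq : M = (Finset.range (d + 1)).biUnion
        (fun i => Finset.powersetCard i Finset.univ) := by
      ext T
      simp [hM, Finset.mem_powersetCard_univ, Nat.lt_succ_iff]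
    rw [hMeq, Finset.card_biUnion]
    · exact Finset.sum_congr rfl fun i _ => by
        rw [Finset.card_powersetCard, Finset.card_univ, Fintype.card_fin]
    · intro i _ j _ hij
      simp only [Function.onFun]
      rw [Finset.disjoint_left]
      intro T hTi hTj
      rw [Finset.mem_powersetCard_univ] at hTi hTj
      exact hij (hTi ▸ hTj)
  -- integer weights
  set w : Finset (Fin n) → (Fin n → Bool) → ℤ :=
    fun T x => ∏ i ∈ T, (if x i then 1 else 0) with hw
  -- rational matrix
  set A : Matrix {x // x ∈ S} {T // T ∈ M} ℚ := fun x T => ((w T x : ℤ) : ℚ) with hA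
  -- nontrivial rational kernel
  have hninj : ¬ Function.Injective A.mulVecLin := by
    intro h
    have hle := LinearMap.finrank_le_finrank_of_injective h
    rw [Module.finrank_pi, Module.finrank_pi] at hle
    rw [Fintype.card_coe, Fintype.card_coe, hMcard] at hle
    omega
  rw [Function.not_injective_iff] at hninj
  obtain ⟨a, b, hab, hne⟩ := hninj
  set v : {T // T ∈ M} → ℚ := a - b with hv
  have hv0 : v ≠ 0 := sub_ne_zero.mpr hne
  have hvker : A.mulVec v = 0 := by
    have : A.mulVecLin a - A.mulVecLin b = 0 := by rw [hab, sub_self]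
    rw [← map_sub] at this
    exact this
  -- clear denominators: integer kernel vector z
  set z : {T // T ∈ M} → ℤ :=
    fun T => (v T).num * ∏ U ∈ Finset.univ.erase T, ((v U).den : ℤ) with hz
  have hzq : ∀ T, (z T : ℚ) = v T * ∏ U : {T // T ∈ M}, ((v U).den : ℚ) := by
    intro T
    rw [hz]
    push_cast
    rw [← Finset.prod_erase_mul _ _ (Finset.mem_univ T), ← mul_assoc, mul_right_comm,
      Rat.mul_den_eq_num]
  have hzker : ∀ x : {x // x ∈ S}, ∑ T : {T // T ∈ M}, z T * w T x = 0 := by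
    intro x
    have hx : ∑ T : {T // T ∈ M}, A x T * v T = 0 := congrFun hvker x
    have : ((∑ T : {T // T ∈ M}, z T * w T x : ℤ) : ℚ) = 0 := by
      push_cast
      calc ∑ T : {T // T ∈ M}, (z T : ℚ) * (w T x : ℚ)
          = (∏ U : {T // T ∈ M}, ((v U).den : ℚ)) * ∑ T : {T // T ∈ M}, A x T * v T := by
            rw [Finset.mul_sum]
            exact Finset.sum_congr rfl fun T _ => by rw [hzq T, hA]; ring
        _ = 0 := by rw [hx, mul_zero]
    exact_mod_cast this
  -- nonzero
  have hz0 : ∃ T, z T ≠ 0 := by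
    obtain ⟨T, hT⟩ := Function.ne_iff.mp hv0
    refine ⟨T, ?_⟩
    rw [hz]
    apply mul_ne_zero
    · exact_mod_cast Rat.num_ne_zero.mpr hT
    · exact Finset.prod_ne_zero_iff.mpr fun U _ => by exact_mod_cast (v U).den_nz
  -- divide by gcd
  set g : ℤ := Finset.gcd Finset.univ z with hg
  have hg0 : g ≠ 0 := by
    rw [hg]
    intro h
    obtain ⟨T, hT⟩ := hz0
    exact hT (Finset.gcd_eq_zero_iff.mp h T (Finset.mem_univ T))
  set u : {T // T ∈ M} → ℤ := fun T => z T / g with hu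
  have hgu : ∀ T, g * u T = z T := fun T =>
    Int.mul_ediv_cancel' (Finset.gcd_dvd (Finset.mem_univ T))
  have huker : ∀ x : {x // x ∈ S}, ∑ T : {T // T ∈ M}, u T * w T x = 0 := by
    intro x
    have : g * ∑ T : {T // T ∈ M}, u T * w T x = 0 := by
      rw [Finset.mul_sum]
      rw [← hzker x]
      exact Finset.sum_congr rfl fun T _ => by rw [← hgu T]; ring
    rcases mul_eq_zero.mp this with h | h
    · exact absurd h hg0
    · exact h
  -- the polynomial over ZMod (2^k)
  set c : Finset (Fin n) → ZMod (2 ^ k) :=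
    fun T => if h : T ∈ M then ((u ⟨T, h⟩ : ℤ) : ZMod (2 ^ k)) else 0 with hc
  have hcM : ∀ (T : Finset (Fin n)) (h : T ∈ M), c T = ((u ⟨T, h⟩ : ℤ) : ZMod (2 ^ k)) := by
    intro T h; rw [hc]; exact dif_pos h
  have hdeg : ∀ T, c T ≠ 0 → T.card ≤ d := by
    intro T hT
    by_contra hcard
    apply hT
    rw [hc]
    exact dif_neg (by simp [hM]; omega)
  have hwcast : ∀ (T : Finset (Fin n)) (x : Fin n → Bool),
      ((w T x : ℤ) : ZMod (2 ^ k)) = ∏ i ∈ T, (if x i then 1 else 0) := by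
    intro T x
    rw [hw]
    push_cast [apply_ite]
    rfl
  have hvanish : ∀ x ∈ S, evalML c x = 0 := by
    intro x hx
    rw [evalML]
    rw [← Finset.sum_subset (Finset.subset_univ M)
      (fun T _ hT => by simp [hc, dif_neg hT])]
    rw [← Finset.sum_coe_sort M]
    have : ∀ T : {T // T ∈ M}, c T.1 * ∏ i ∈ T.1, (if x i then 1 else 0)
        = ((u T * w T x : ℤ) : ZMod (2 ^ k)) := by
      intro T
      rw [hcM T.1 T.2, ← hwcast, ← Int.cast_mul]
    rw [Finset.sum_congr rfl fun T _ => this T, ← Int.cast_sum]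
    rw [show (∑ T : {T // T ∈ M}, (u T * w T x : ℤ)) = 0 from huker ⟨x, hx⟩]
    exact Int.cast_zero
  have hforce := hforcing c hdeg hvanish
  -- evaluation at indicator points forces all coefficients even
  have key : ∀ T : Finset (Fin n), (2 ^ (k - 1) : ZMod (2 ^ k)) * c T = 0 := by
    intro T
    induction T using Finset.strongInduction with
    | _ T ih =>
      have h := hforce (fun i => decide (i ∈ T))
      have hprod : ∀ U : Finset (Fin n),
          (∏ i ∈ U, (if (decide (i ∈ T) : Bool) then (1 : ZMod (2 ^ k)) else 0))
          = if U ⊆ T then 1 else 0 := by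
        intro U
        by_cases hUT : U ⊆ T
        · rw [if_pos hUT]
          exact Finset.prod_eq_one fun i hi => by simp [hUT hi]
        · rw [if_neg hUT]
          obtain ⟨i, hiU, hiT⟩ := Finset.not_subset.mp hUT
          exact Finset.prod_eq_zero hiU (by simp [hiT])
      have heval : evalML c (fun i => decide (i ∈ T)) = ∑ U ∈ T.powerset, c U := by
        rw [evalML]
        simp_rw [hprod, mul_ite, mul_one, mul_zero]
        rw [← Finset.sum_filter]
        congr 1
        ext U
        simp [Finset.mem_powerset]
      rw [heval, ← Finset.add_sum_erase _ _ (Finset.mem_powerset_self T), mul_add] at h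
      have hrest : (2 ^ (k - 1) : ZMod (2 ^ k)) * ∑ U ∈ T.powerset.erase T, c U = 0 := by
        rw [Finset.mul_sum]
        apply Finset.sum_eq_zero
        intro U hU
        rw [Finset.mem_erase, Finset.mem_powerset] at hU
        exact ih U (HasSubset.Subset.ssubset_of_ne hU.2 hU.1)
      rw [hrest, add_zero] at h
      exact h
  -- all coordinates of u are even
  have heven : ∀ T : {T // T ∈ M}, 2 ∣ u T := by
    intro T
    have h := key T.1
    rw [hcM T.1 T.2] at h
    have : (((2 ^ (k - 1) * u T : ℤ)) : ZMod (2 ^ k)) = 0 := by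
      push_cast
      exact h
    rw [ZMod.intCast_zmod_eq_zero_iff_dvd] at this
    have h2 : ((2 : ℤ) ^ k : ℤ) = 2 ^ (k - 1) * 2 := by
      rw [← pow_succ]
      congr 1
      omega
    rw [show ((2 ^ k : ℕ) : ℤ) = 2 ^ (k - 1) * 2 by push_cast [h2]; rfl] at this
    have hpow : (2 : ℤ) ^ (k - 1) ≠ 0 := by positivity
    exact (mul_dvd_mul_iff_left hpow).mp this
  -- contradiction with gcd
  have hdvd : (2 * g) ∣ g := by
    rw [hg]
    apply Finset.dvd_gcd
    intro T _
    obtain ⟨m, hm⟩ := heven T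
    exact ⟨m, by rw [← hgu T, hm]; ring⟩
  obtain ⟨t, ht⟩ := hdvd
  have : g * 1 = g * (2 * t) := by linarith [ht]
  have h1 : (1 : ℤ) = 2 * t := mul_left_cancel₀ hg0 this
  omega
end

section
/- (Bipartite hypergraph Ramsey) For all natural numbers i, j, r there exists n_R(i,j,r) such that for all n ≥ n_R(i,j,r), for any disjoint sets I, J of size n each, and for any coloring c : C(I,i) × C(J,j) → {0,1} of pairs consisting of an i-subset of I and a j-subset of J, there exist I' ⊆ I and J' ⊆ J with |I'| = |J'| = r such that c is constant on C(I',i) × C(J',j). -/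
open Finset

/-- The elements of `T` having fewer than `i` smaller elements in `T`
(i.e. the `i` smallest elements of `T`). -/
private def lowerPart (i : ℕ) (T : Finset ℕ) : Finset ℕ :=
  T.filter (fun t => (T.filter (· < t)).card < i)

private lemma lowerPart_eq (i : ℕ) (Sa Sb : Finset ℕ) (hi : Sa.card = i)
    (hlt : ∀ x ∈ Sa, ∀ y ∈ Sb, x < y) : lowerPart i (Sa ∪ Sb) = Sa := by
  ext t
  simp only [lowerPart, mem_filter, mem_union]
  constructor
  · rintro ⟨ht | ht, hcard⟩
    · exact ht
    · exfalso
      have hsub : Sa ⊆ (Sa ∪ Sb).filter (· < t) := by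
        intro a ha
        simp only [mem_filter, mem_union]
        exact ⟨Or.inl ha, hlt a ha t ht⟩
      have := card_le_card hsub
      omega
  · intro ht
    refine ⟨Or.inl ht, ?_⟩
    have hsub : (Sa ∪ Sb).filter (· < t) ⊆ Sa.erase t := by
      intro s hs
      simp only [mem_filter, mem_union] at hs
      rcases hs with ⟨hs1 | hs1, hs2⟩
      · exact mem_erase.mpr ⟨by omega, hs1⟩
      · exact absurd (hlt t ht s hs1) (by omega)
    have h1 := card_le_card hsub
    have h2 : (Sa.erase t).card = Sa.card - 1 := card_erase_of_mem ht
    have h3 : 0 < Sa.card := card_pos.mpr ⟨t, ht⟩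
    omega

/-- Any `2r`-element finset of naturals splits into its `r` smallest and `r` largest. -/
private lemma splitLem : ∀ (r : ℕ) (s : Finset ℕ), s.card = r + r →
    ∃ a b : Finset ℕ, s = a ∪ b ∧ a.card = r ∧ b.card = r ∧ ∀ x ∈ a, ∀ y ∈ b, x < y := by
  intro r
  induction r with
  | zero =>
    intro s hs
    exact ⟨∅, ∅, by simpa using card_eq_zero.mp hs, rfl, rfl, by simp⟩
  | succ k ih =>
    intro s hs
    have hne : s.Nonempty := card_pos.mp (by omega)
    have hxy : s.min' hne < s.max' hne := min'_lt_max'_of_card s (by omega)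
    set x0 := s.min' hne
    set y0 := s.max' hne
    have hy0mem : y0 ∈ s.erase x0 := mem_erase.mpr ⟨by omega, s.max'_mem hne⟩
    have hcard' : ((s.erase x0).erase y0).card = k + k := by
      rw [card_erase_of_mem hy0mem, card_erase_of_mem (s.min'_mem hne)]
      omega
    obtain ⟨a, b, hab, hac, hbc, hord⟩ := ih ((s.erase x0).erase y0) hcard'
    have hs'sub : ∀ t ∈ (s.erase x0).erase y0, t ∈ s ∧ t ≠ x0 ∧ t ≠ y0 := by
      intro t ht
      simp only [mem_erase] at ht
      exact ⟨ht.2.2, ht.2.1, ht.1⟩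
    have has : ∀ t ∈ a, t ∈ s ∧ t ≠ x0 ∧ t ≠ y0 :=
      fun t ht => hs'sub t (hab ▸ mem_union_left _ ht)
    have hbs : ∀ t ∈ b, t ∈ s ∧ t ≠ x0 ∧ t ≠ y0 :=
      fun t ht => hs'sub t (hab ▸ mem_union_right _ ht)
    refine ⟨insert x0 a, insert y0 b, ?_, ?_, ?_, ?_⟩
    · rw [insert_union, union_insert, ← hab, insert_erase hy0mem, insert_erase (s.min'_mem hne)]
    · rw [card_insert_of_notMem (fun h => (has x0 h).2.1 rfl), hac]
    · rw [card_insert_of_notMem (fun h => (hbs y0 h).2.2 rfl), hbc]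
    · intro x hx y hy
      rcases mem_insert.mp hx with rfl | hx <;> rcases mem_insert.mp hy with rfl | hy
      · exact hxy
      · have := hbs y hy
        have := s.min'_le y this.1
        omega
      · have := has x hx
        have := s.le_max' x this.1
        omega
      · exact hord x hx y hy

/-- Key step: colours of `(k+1)`-subsets can be made to depend only on the minimum. -/
private lemma preRamsey (k : ℕ)
    (Hk : ∀ r : ℕ, ∃ N : ℕ, ∀ S : Finset ℕ, N ≤ S.card → ∀ c : Finset ℕ → Bool,
      ∃ T, T ⊆ S ∧ T.card = r ∧ ∃ b, ∀ A, A ⊆ T → A.card = k → c A = b) :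
    ∀ m : ℕ, ∃ N : ℕ, ∀ S : Finset ℕ, N ≤ S.card → ∀ c : Finset ℕ → Bool,
      ∃ (T : Finset ℕ) (f : ℕ → Bool), T ⊆ S ∧ T.card = m ∧
        ∀ A, A ⊆ T → A.card = k + 1 → ∀ h : A.Nonempty, c A = f (A.min' h) := by
  intro m
  induction m with
  | zero =>
    refine ⟨0, fun S _ c => ⟨∅, fun _ => true, empty_subset _, card_empty, ?_⟩⟩
    intro A hA hcard _
    rw [subset_empty.mp hA] at hcard
    simp at hcard
  | succ m ih =>
    obtain ⟨Nm, hNm⟩ := ih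
    obtain ⟨No, hNo⟩ := Hk Nm
    refine ⟨No + 1, fun S hS c => ?_⟩
    have hne : S.Nonempty := card_pos.mp (by omega)
    set v := S.min' hne with hv
    have hvS : v ∈ S := S.min'_mem hne
    have hcard' : No ≤ (S.erase v).card := by rw [card_erase_of_mem hvS]; omega
    obtain ⟨T₀, hT₀S, hT₀c, b, hb⟩ := hNo (S.erase v) hcard' (fun A => c (insert v A))
    obtain ⟨T₁, f₁, hT₁, hT₁c, h₁⟩ := hNm T₀ (le_of_eq hT₀c.symm) c
    have hvT₁ : v ∉ T₁ := fun h => (mem_erase.mp (hT₀S (hT₁ h))).1 rfl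
    have hT₁S : T₁ ⊆ S := (hT₁.trans hT₀S).trans (erase_subset _ _)
    have hTS : insert v T₁ ⊆ S := insert_subset hvS hT₁S
    refine ⟨insert v T₁, fun t => if t = v then b else f₁ t, hTS, by
      rw [card_insert_of_notMem hvT₁, hT₁c], ?_⟩
    intro A hA hAc hAne
    by_cases hvA : v ∈ A
    · have hmin : A.min' hAne = v :=
        le_antisymm (min'_le _ _ hvA) (S.min'_le _ (hTS (hA (A.min'_mem hAne))))
      have hAe : A.erase v ⊆ T₁ := by
        intro t ht
        obtain ⟨htv, htA⟩ := mem_erase.mp ht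
        exact (mem_insert.mp (hA htA)).resolve_left htv
      have hAec : (A.erase v).card = k := by rw [card_erase_of_mem hvA, hAc]; omega
      have hcb := hb (A.erase v) (hAe.trans hT₁) hAec
      rw [insert_erase hvA] at hcb
      simp only [hmin, if_pos rfl]
      exact hcb
    · have hAT₁ : A ⊆ T₁ := fun t ht => (mem_insert.mp (hA ht)).resolve_left (fun h => hvA (h ▸ ht))
      have hne' : A.min' hAne ≠ v := fun h => hvA (h ▸ A.min'_mem hAne)
      simp only [if_neg hne']
      exact h₁ A hAT₁ hAc hAne

/-- Hypergraph Ramsey theorem for 2 colours, over `ℕ`. -/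
private lemma hRamsey : ∀ k r : ℕ, ∃ N : ℕ, ∀ S : Finset ℕ, N ≤ S.card →
    ∀ c : Finset ℕ → Bool, ∃ T, T ⊆ S ∧ T.card = r ∧
      ∃ b, ∀ A, A ⊆ T → A.card = k → c A = b := by
  intro k
  induction k with
  | zero =>
    intro r
    refine ⟨r, fun S hS c => ?_⟩
    obtain ⟨T, hT, hTc⟩ := S.exists_subset_card_eq hS
    exact ⟨T, hT, hTc, c ∅, fun A hA hAc => by rw [card_eq_zero.mp hAc]⟩
  | succ k ihk =>
    intro r
    obtain ⟨N, hN⟩ := preRamsey k ihk (r + r)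
    refine ⟨N, fun S hS c => ?_⟩
    obtain ⟨T, f, hTS, hTc, hf⟩ := hN S hS c
    have hsplit := card_filter_add_card_filter_not (s := T) (p := fun t => f t = true)
    by_cases hr : r ≤ (T.filter (fun t => f t = true)).card
    · obtain ⟨T', hT', hT'c⟩ := exists_subset_card_eq hr
      refine ⟨T', hT'.trans ((filter_subset _ _).trans hTS), hT'c, true, ?_⟩
      intro A hA hAc
      have hAne : A.Nonempty := card_pos.mp (by omega)
      have hAT : A ⊆ T := hA.trans (hT'.trans (filter_subset _ _))
      rw [hf A hAT hAc hAne]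
      have := hT' (hA (A.min'_mem hAne))
      exact (mem_filter.mp this).2
    · have hr' : r ≤ (T.filter (fun t => ¬ (f t = true))).card := by omega
      obtain ⟨T', hT', hT'c⟩ := exists_subset_card_eq hr'
      refine ⟨T', hT'.trans ((filter_subset _ _).trans hTS), hT'c, false, ?_⟩
      intro A hA hAc
      have hAne : A.Nonempty := card_pos.mp (by omega)
      have hAT : A ⊆ T := hA.trans (hT'.trans (filter_subset _ _))
      rw [hf A hAT hAc hAne]
      have := hT' (hA (A.min'_mem hAne))
      have := (mem_filter.mp this).2
      simpa using this
/-- Bipartite hypergraph Ramsey theorem: for all `i, j, r` there is `N` such that for all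
`n ≥ N`, disjoint `n`-sets `I, J`, and 2-colourings `c` of pairs `(A, B)` with `A` an
`i`-subset of `I` and `B` a `j`-subset of `J`, there are `r`-sets `I' ⊆ I`, `J' ⊆ J` on
which `c` is constant. -/
theorem stmt18 (i j r : ℕ) :
    ∃ N : ℕ, ∀ n : ℕ, N ≤ n →
      ∀ (α : Type) (_ : DecidableEq α) (I J : Finset α),
        Disjoint I J → I.card = n → J.card = n →
        ∀ c : Finset α → Finset α → Bool,
          ∃ I' J' : Finset α, I' ⊆ I ∧ J' ⊆ J ∧ I'.card = r ∧ J'.card = r ∧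
            ∃ b : Bool, ∀ A B : Finset α,
              A ⊆ I' → B ⊆ J' → A.card = i → B.card = j → c A B = b := by
  obtain ⟨M, hM⟩ := hRamsey (i + j) (r + r)
  refine ⟨M + 1, ?_⟩
  intro n hn α instDE I J hIJ hI hJ c
  have npos : 0 < n := by omega
  have hIc : 0 < I.card := by omega
  have hJc : 0 < J.card := by omega
  set u : ℕ → α := fun t => (I.equivFin.symm ⟨t % I.card, Nat.mod_lt t hIc⟩ : α) with hu
  set w : ℕ → α := fun t => (J.equivFin.symm ⟨t % J.card, Nat.mod_lt t hJc⟩ : α) with hw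
  have huI : ∀ t, u t ∈ I := fun t => (I.equivFin.symm _).2
  have hwJ : ∀ t, w t ∈ J := fun t => (J.equivFin.symm _).2
  have huinj : ∀ t₁ t₂, t₁ < n → t₂ < n → u t₁ = u t₂ → t₁ = t₂ := by
    intro t₁ t₂ h₁ h₂ h
    have h2 := I.equivFin.symm.injective (Subtype.coe_injective h)
    have h3 : t₁ % I.card = t₂ % I.card := congrArg Fin.val h2
    rwa [Nat.mod_eq_of_lt (by omega), Nat.mod_eq_of_lt (by omega)] at h3
  have hwinj : ∀ t₁ t₂, t₁ < n → t₂ < n → w t₁ = w t₂ → t₁ = t₂ := by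
    intro t₁ t₂ h₁ h₂ h
    have h2 := J.equivFin.symm.injective (Subtype.coe_injective h)
    have h3 : t₁ % J.card = t₂ % J.card := congrArg Fin.val h2
    rwa [Nat.mod_eq_of_lt (by omega), Nat.mod_eq_of_lt (by omega)] at h3
  obtain ⟨K, hKsub, hKcard, b, hKmono⟩ := hM (range n) (by rw [card_range]; omega)
    (fun T => c ((lowerPart i T).image u) ((T \ lowerPart i T).image w))
  obtain ⟨P, Q, hPQ, hPc, hQc, hord⟩ := splitLem r K hKcard
  have hPK : P ⊆ K := by rw [hPQ]; exact subset_union_left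
  have hQK : Q ⊆ K := by rw [hPQ]; exact subset_union_right
  have hPn : ∀ t ∈ P, t < n := fun t ht => mem_range.mp (hKsub (hPK ht))
  have hQn : ∀ t ∈ Q, t < n := fun t ht => mem_range.mp (hKsub (hQK ht))
  refine ⟨P.image u, Q.image w, ?_, ?_, ?_, ?_, b, ?_⟩
  · exact image_subset_iff.mpr fun t _ => huI t
  · exact image_subset_iff.mpr fun t _ => hwJ t
  · rw [card_image_of_injOn (fun a ha b hb hab => huinj a b (hPn a ha) (hPn b hb) hab), hPc]
  · rw [card_image_of_injOn (fun a ha b hb hab => hwinj a b (hQn a ha) (hQn b hb) hab), hQc]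
  · intro A B hA hB hAc hBc
    set Sa := P.filter (fun t => u t ∈ A) with hSa
    set Sb := Q.filter (fun t => w t ∈ B) with hSb
    have hSaP : Sa ⊆ P := filter_subset _ _
    have hSbQ : Sb ⊆ Q := filter_subset _ _
    have hSaim : Sa.image u = A := by
      ext x
      simp only [hSa, mem_image, mem_filter]
      constructor
      · rintro ⟨t, ⟨_, htA⟩, rfl⟩; exact htA
      · intro hx
        obtain ⟨t, htP, rfl⟩ := mem_image.mp (hA hx)
        exact ⟨t, ⟨htP, hx⟩, rfl⟩
    have hSbim : Sb.image w = B := by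
      ext x
      simp only [hSb, mem_image, mem_filter]
      constructor
      · rintro ⟨t, ⟨_, htB⟩, rfl⟩; exact htB
      · intro hx
        obtain ⟨t, htQ, rfl⟩ := mem_image.mp (hB hx)
        exact ⟨t, ⟨htQ, hx⟩, rfl⟩
    have hSac : Sa.card = i := by
      rw [← hAc, ← hSaim,
        card_image_of_injOn (fun a ha b hb hab =>
          huinj a b (hPn a (hSaP ha)) (hPn b (hSaP hb)) hab)]
    have hSbc : Sb.card = j := by
      rw [← hBc, ← hSbim,
        card_image_of_injOn (fun a ha b hb hab =>
          hwinj a b (hQn a (hSbQ ha)) (hQn b (hSbQ hb)) hab)]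
    have hordab : ∀ x ∈ Sa, ∀ y ∈ Sb, x < y := fun x hx y hy => hord x (hSaP hx) y (hSbQ hy)
    have hdisj : Disjoint Sa Sb := by
      rw [disjoint_left]
      intro t ht ht'
      exact absurd (hordab t ht t ht') (lt_irrefl t)
    have hTcard : (Sa ∪ Sb).card = i + j := by
      rw [card_union_of_disjoint hdisj, hSac, hSbc]
    have hTK : Sa ∪ Sb ⊆ K := by rw [hPQ]; exact union_subset_union hSaP hSbQ
    have hd := hKmono (Sa ∪ Sb) hTK hTcard
    have hl : lowerPart i (Sa ∪ Sb) = Sa := lowerPart_eq i Sa Sb hSac hordab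
    have hsd : (Sa ∪ Sb) \ Sa = Sb := union_sdiff_cancel_left hdisj
    simp only [hl, hsd, hSaim, hSbim] at hd
    exact hd
end
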